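/- arXiv:1503.00091 — 7 statements merged into one kernel-verified Lean document; each statement's English description precedes it below -/
import Mathlib

section
/- Let G be a finite simple graph and let D be a subset of vertices. Define the weight function ω(v) = |N[v]|. Then D is an efficient dominating set of G if and only if D is an independent set in the square G² with total weight ω(D) = |V(G)|. -/
open SimpleGraph Finset

variable {V : Type*}

/-- The square of a graph `G`: two distinct vertices are adjacent iff
their distance in `G` is 1 or 2. -/
def square (G : SimpleGraph V) : SimpleGraph V where
  Adj u v := u ≠ v ∧ (G.Adj u v ∨ ∃ w, G.Adj u w ∧ G.Adj w v)
  symm := ⟨by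
    rintro u v ⟨h, h2 | ⟨w, hw1, hw2⟩⟩
    · exact ⟨h.symm, Or.inl h2.symm⟩
    · exact ⟨h.symm, Or.inr ⟨w, hw2.symm, hw1.symm⟩⟩⟩
  loopless := ⟨by rintro u ⟨h, _⟩; exact h rfl⟩

/-- `D` is an efficient dominating set of `G`: every vertex is dominated
(by closed neighborhoods) by exactly one vertex of `D`. -/
def IsEDS (G : SimpleGraph V) (D : Set V) : Prop :=
  ∀ v : V, ∃! d : V, d ∈ D ∧ (d = v ∨ G.Adj d v)

/-- `G` has no induced subgraph isomorphic to `H`. -/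
def Free {W : Type*} (G : SimpleGraph V) (H : SimpleGraph W) : Prop :=
  IsEmpty (H ↪g G)

/-- The house: the complement of the path on five vertices. -/
def house : SimpleGraph (Fin 5) := (pathGraph 5)ᶜ

/-- The domino: a `P₅` `x₁ … x₅` together with a vertex adjacent to `x₁, x₃, x₅`. -/
def domino : SimpleGraph (Fin 6) :=
  SimpleGraph.fromRel (fun i j =>
    (i, j) ∈ [((0 : Fin 6), (1 : Fin 6)), (1, 2), (2, 3), (3, 4), (5, 0), (5, 2), (5, 4)])

/-- A graph is hole-free if it contains no induced cycle `C_k`, `k ≥ 5`. -/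
def HoleFree (G : SimpleGraph V) : Prop := ∀ k, 5 ≤ k → _root_.Free G (cycleGraph k)

/-- A graph is chordal if it contains no induced cycle `C_k`, `k ≥ 4`. -/
def Chordal (G : SimpleGraph V) : Prop := ∀ k, 4 ≤ k → _root_.Free G (cycleGraph k)

theorem stmt0 [Fintype V] [DecidableEq V] (G : SimpleGraph V) [DecidableRel G.Adj]
    (D : Finset V) :
    IsEDS G (D : Set V) ↔
      ((∀ u ∈ D, ∀ v ∈ D, u ≠ v → ¬ (square G).Adj u v) ∧
        ∑ v ∈ D, (insert v (G.neighborFinset v)).card = Fintype.card V) := by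
  classical
  set N : V → Finset V := fun d => insert d (G.neighborFinset d) with hN
  have hmem : ∀ d v : V, v ∈ N d ↔ (d = v ∨ G.Adj d v) := by
    intro d v
    simp [N, eq_comm]
  constructor
  · intro h
    have hdisj : ∀ u ∈ D, ∀ v ∈ D, u ≠ v → Disjoint (N u) (N v) := by
      intro u hu v hv huv
      rw [Finset.disjoint_left]
      intro x hxu hxv
      have h1 := (hmem u x).mp hxu
      have h2 := (hmem v x).mp hxv
      have := (h x).unique ⟨hu, h1⟩ ⟨hv, h2⟩
      exact huv this
    constructor
    · intro u hu v hv huv hadj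
      obtain ⟨_, hadj | ⟨w, hw1, hw2⟩⟩ := hadj
      · exact huv ((h v).unique ⟨hu, Or.inr hadj⟩ ⟨hv, Or.inl rfl⟩)
      · exact huv ((h w).unique ⟨hu, Or.inr hw1⟩ ⟨hv, Or.inr hw2.symm⟩)
    · have hcard : (D.biUnion N).card = ∑ v ∈ D, (N v).card :=
        Finset.card_biUnion hdisj
      have huniv : D.biUnion N = Finset.univ := by
        apply Finset.eq_univ_of_forall
        intro v
        obtain ⟨d, ⟨hd, hd2⟩, -⟩ := h v
        exact Finset.mem_biUnion.mpr ⟨d, hd, (hmem d v).mpr hd2⟩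
      rw [← hcard, huniv, Finset.card_univ]
  · rintro ⟨hind, hsum⟩
    have hdisj : ∀ u ∈ D, ∀ v ∈ D, u ≠ v → Disjoint (N u) (N v) := by
      intro u hu v hv huv
      rw [Finset.disjoint_left]
      intro x hxu hxv
      have h1 := (hmem u x).mp hxu
      have h2 := (hmem v x).mp hxv
      apply hind u hu v hv huv
      refine ⟨huv, ?_⟩
      rcases h1 with rfl | h1
      · rcases h2 with rfl | h2
        · exact absurd rfl huv
        · exact Or.inl h2.symm
      · rcases h2 with rfl | h2
        · exact Or.inl h1
        · exact Or.inr ⟨x, h1, h2.symm⟩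
    have hcard : (D.biUnion N).card = Fintype.card V := by
      rw [Finset.card_biUnion hdisj]; exact hsum
    have huniv : D.biUnion N = Finset.univ :=
      Finset.eq_univ_of_card _ (hcard.trans Finset.card_univ.symm)
    intro v
    have : v ∈ D.biUnion N := huniv ▸ Finset.mem_univ v
    obtain ⟨d, hd, hdv⟩ := Finset.mem_biUnion.mp this
    refine ⟨d, ⟨hd, (hmem d v).mp hdv⟩, ?_⟩
    rintro e ⟨he, he2⟩
    by_contra hne
    exact Finset.disjoint_left.mp (hdisj e he d hd hne) ((hmem e v).mpr he2) hdv
end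

section
/- Let G be a (P₆, house, hole, domino)-free graph with an efficient dominating set D, and suppose G² contains an induced cycle C_k with k ≥ 4 on vertices v₁,...,v_k. Then for all i (indices mod k), the distance in G between v_i and v_{i+1} is exactly 2. -/
open SimpleGraph Finset

variable {V : Type*}

def pick5 (u1 u2 u3 u4 u5 : V) : Fin 5 → V := fun j =>
  if j.val = 0 then u1 else if j.val = 1 then u2 else if j.val = 2 then u3
  else if j.val = 3 then u4 else u5

def pick6 (u1 u2 u3 u4 u5 u6 : V) : Fin 6 → V := fun j =>
  if j.val = 0 then u1 else if j.val = 1 then u2 else if j.val = 2 then u3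
  else if j.val = 3 then u4 else if j.val = 4 then u5 else u6


set_option maxHeartbeats 2000000 in
lemma p6False {G : SimpleGraph V} (hfree : _root_.Free G (pathGraph 6))
 (u1 u2 u3 u4 u5 u6 : V)
 (a12 : G.Adj u1 u2) (a23 : G.Adj u2 u3) (a34 : G.Adj u3 u4) (a45 : G.Adj u4 u5) (a56 : G.Adj u5 u6)
 (n13 : ¬G.Adj u1 u3) (n14 : ¬G.Adj u1 u4) (n15 : ¬G.Adj u1 u5) (n16 : ¬G.Adj u1 u6) (n24 : ¬G.Adj u2 u4) (n25 : ¬G.Adj u2 u5) (n26 : ¬G.Adj u2 u6) (n35 : ¬G.Adj u3 u5) (n36 : ¬G.Adj u3 u6) (n46 : ¬G.Adj u4 u6)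
 (e13 : u1 ≠ u3) (e14 : u1 ≠ u4) (e15 : u1 ≠ u5) (e16 : u1 ≠ u6) (e24 : u2 ≠ u4) (e25 : u2 ≠ u5) (e26 : u2 ≠ u6) (e35 : u3 ≠ u5) (e36 : u3 ≠ u6) (e46 : u4 ≠ u6) : False := by
  have ee12 := a12.ne
  have s21 := a12.symm
  have ee23 := a23.ne
  have s32 := a23.symm
  have ee34 := a34.ne
  have s43 := a34.symm
  have ee45 := a45.ne
  have s54 := a45.symm
  have ee56 := a56.ne
  have s65 := a56.symm
  have m31 : ¬G.Adj u3 u1 := fun h => n13 h.symm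
  have m41 : ¬G.Adj u4 u1 := fun h => n14 h.symm
  have m51 : ¬G.Adj u5 u1 := fun h => n15 h.symm
  have m61 : ¬G.Adj u6 u1 := fun h => n16 h.symm
  have m42 : ¬G.Adj u4 u2 := fun h => n24 h.symm
  have m52 : ¬G.Adj u5 u2 := fun h => n25 h.symm
  have m62 : ¬G.Adj u6 u2 := fun h => n26 h.symm
  have m53 : ¬G.Adj u5 u3 := fun h => n35 h.symm
  have m63 : ¬G.Adj u6 u3 := fun h => n36 h.symm
  have m64 : ¬G.Adj u6 u4 := fun h => n46 h.symm
  have l1 : ¬G.Adj u1 u1 := G.loopless.irrefl u1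
  have l2 : ¬G.Adj u2 u2 := G.loopless.irrefl u2
  have l3 : ¬G.Adj u3 u3 := G.loopless.irrefl u3
  have l4 : ¬G.Adj u4 u4 := G.loopless.irrefl u4
  have l5 : ¬G.Adj u5 u5 := G.loopless.irrefl u5
  have l6 : ¬G.Adj u6 u6 := G.loopless.irrefl u6
  refine hfree.false ⟨⟨pick6 u1 u2 u3 u4 u5 u6, ?_⟩, ?_⟩
  · intro a b h
    fin_cases a <;> fin_cases b <;> simp_all [pick6]
  · intro a b
    fin_cases a <;> fin_cases b <;> simp (config := { decide := true }) [pick6, pathGraph_adj] <;> assumption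

lemma c5False {G : SimpleGraph V} (hfree : _root_.Free G (cycleGraph 5))
 (u1 u2 u3 u4 u5 : V)
 (a12 : G.Adj u1 u2) (a23 : G.Adj u2 u3) (a34 : G.Adj u3 u4) (a45 : G.Adj u4 u5) (a15 : G.Adj u1 u5)
 (n13 : ¬G.Adj u1 u3) (n14 : ¬G.Adj u1 u4) (n24 : ¬G.Adj u2 u4) (n25 : ¬G.Adj u2 u5) (n35 : ¬G.Adj u3 u5)
 (e13 : u1 ≠ u3) (e14 : u1 ≠ u4) (e24 : u2 ≠ u4) (e25 : u2 ≠ u5) (e35 : u3 ≠ u5) : False := by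
  have ee12 := a12.ne
  have s21 := a12.symm
  have ee23 := a23.ne
  have s32 := a23.symm
  have ee34 := a34.ne
  have s43 := a34.symm
  have ee45 := a45.ne
  have s54 := a45.symm
  have ee15 := a15.ne
  have s51 := a15.symm
  have m31 : ¬G.Adj u3 u1 := fun h => n13 h.symm
  have m41 : ¬G.Adj u4 u1 := fun h => n14 h.symm
  have m42 : ¬G.Adj u4 u2 := fun h => n24 h.symm
  have m52 : ¬G.Adj u5 u2 := fun h => n25 h.symm
  have m53 : ¬G.Adj u5 u3 := fun h => n35 h.symm
  have l1 : ¬G.Adj u1 u1 := G.loopless.irrefl u1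
  have l2 : ¬G.Adj u2 u2 := G.loopless.irrefl u2
  have l3 : ¬G.Adj u3 u3 := G.loopless.irrefl u3
  have l4 : ¬G.Adj u4 u4 := G.loopless.irrefl u4
  have l5 : ¬G.Adj u5 u5 := G.loopless.irrefl u5
  refine hfree.false ⟨⟨pick5 u1 u2 u3 u4 u5, ?_⟩, ?_⟩
  · intro a b h
    fin_cases a <;> fin_cases b <;> simp_all [pick5]
  · intro a b
    fin_cases a <;> fin_cases b <;> simp (config := { decide := true }) [pick5, cycleGraph_adj'] <;> assumption

set_option maxHeartbeats 2000000 in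
lemma c6False {G : SimpleGraph V} (hfree : _root_.Free G (cycleGraph 6))
 (u1 u2 u3 u4 u5 u6 : V)
 (a12 : G.Adj u1 u2) (a23 : G.Adj u2 u3) (a34 : G.Adj u3 u4) (a45 : G.Adj u4 u5) (a56 : G.Adj u5 u6) (a16 : G.Adj u1 u6)
 (n13 : ¬G.Adj u1 u3) (n14 : ¬G.Adj u1 u4) (n15 : ¬G.Adj u1 u5) (n24 : ¬G.Adj u2 u4) (n25 : ¬G.Adj u2 u5) (n26 : ¬G.Adj u2 u6) (n35 : ¬G.Adj u3 u5) (n36 : ¬G.Adj u3 u6) (n46 : ¬G.Adj u4 u6)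
 (e13 : u1 ≠ u3) (e14 : u1 ≠ u4) (e15 : u1 ≠ u5) (e24 : u2 ≠ u4) (e25 : u2 ≠ u5) (e26 : u2 ≠ u6) (e35 : u3 ≠ u5) (e36 : u3 ≠ u6) (e46 : u4 ≠ u6) : False := by
  have ee12 := a12.ne
  have s21 := a12.symm
  have ee23 := a23.ne
  have s32 := a23.symm
  have ee34 := a34.ne
  have s43 := a34.symm
  have ee45 := a45.ne
  have s54 := a45.symm
  have ee56 := a56.ne
  have s65 := a56.symm
  have ee16 := a16.ne
  have s61 := a16.symm
  have m31 : ¬G.Adj u3 u1 := fun h => n13 h.symm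
  have m41 : ¬G.Adj u4 u1 := fun h => n14 h.symm
  have m51 : ¬G.Adj u5 u1 := fun h => n15 h.symm
  have m42 : ¬G.Adj u4 u2 := fun h => n24 h.symm
  have m52 : ¬G.Adj u5 u2 := fun h => n25 h.symm
  have m62 : ¬G.Adj u6 u2 := fun h => n26 h.symm
  have m53 : ¬G.Adj u5 u3 := fun h => n35 h.symm
  have m63 : ¬G.Adj u6 u3 := fun h => n36 h.symm
  have m64 : ¬G.Adj u6 u4 := fun h => n46 h.symm
  have l1 : ¬G.Adj u1 u1 := G.loopless.irrefl u1
  have l2 : ¬G.Adj u2 u2 := G.loopless.irrefl u2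
  have l3 : ¬G.Adj u3 u3 := G.loopless.irrefl u3
  have l4 : ¬G.Adj u4 u4 := G.loopless.irrefl u4
  have l5 : ¬G.Adj u5 u5 := G.loopless.irrefl u5
  have l6 : ¬G.Adj u6 u6 := G.loopless.irrefl u6
  refine hfree.false ⟨⟨pick6 u1 u2 u3 u4 u5 u6, ?_⟩, ?_⟩
  · intro a b h
    fin_cases a <;> fin_cases b <;> simp_all [pick6]
  · intro a b
    fin_cases a <;> fin_cases b <;> simp (config := { decide := true }) [pick6, cycleGraph_adj'] <;> assumption

lemma houseFalse {G : SimpleGraph V} (hfree : _root_.Free G house)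
 (hp hr hz hq hs : V)
 (a13 : G.Adj hp hz) (a14 : G.Adj hp hq) (a15 : G.Adj hp hs) (a24 : G.Adj hr hq) (a25 : G.Adj hr hs) (a35 : G.Adj hz hs)
 (n12 : ¬G.Adj hp hr) (n23 : ¬G.Adj hr hz) (n34 : ¬G.Adj hz hq) (n45 : ¬G.Adj hq hs)
 (e12 : hp ≠ hr) (e23 : hr ≠ hz) (e34 : hz ≠ hq) (e45 : hq ≠ hs) : False := by
  have ee13 := a13.ne
  have s31 := a13.symm
  have ee14 := a14.ne
  have s41 := a14.symm
  have ee15 := a15.ne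
  have s51 := a15.symm
  have ee24 := a24.ne
  have s42 := a24.symm
  have ee25 := a25.ne
  have s52 := a25.symm
  have ee35 := a35.ne
  have s53 := a35.symm
  have m21 : ¬G.Adj hr hp := fun h => n12 h.symm
  have m32 : ¬G.Adj hz hr := fun h => n23 h.symm
  have m43 : ¬G.Adj hq hz := fun h => n34 h.symm
  have m54 : ¬G.Adj hs hq := fun h => n45 h.symm
  have l1 : ¬G.Adj hp hp := G.loopless.irrefl hp
  have l2 : ¬G.Adj hr hr := G.loopless.irrefl hr
  have l3 : ¬G.Adj hz hz := G.loopless.irrefl hz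
  have l4 : ¬G.Adj hq hq := G.loopless.irrefl hq
  have l5 : ¬G.Adj hs hs := G.loopless.irrefl hs
  refine hfree.false ⟨⟨pick5 hp hr hz hq hs, ?_⟩, ?_⟩
  · intro a b h
    fin_cases a <;> fin_cases b <;> simp_all [pick5]
  · intro a b
    fin_cases a <;> fin_cases b <;> simp (config := { decide := true }) [house, pick5, pathGraph_adj, compl_adj] <;> assumption

set_option maxHeartbeats 2000000 in
lemma dominoFalse {G : SimpleGraph V} (hfree : _root_.Free G domino)
 (d0 d1 d2 d3 d4 d5 : V)
 (a12 : G.Adj d0 d1) (a23 : G.Adj d1 d2) (a34 : G.Adj d2 d3) (a45 : G.Adj d3 d4) (a16 : G.Adj d0 d5) (a36 : G.Adj d2 d5) (a56 : G.Adj d4 d5)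
 (n13 : ¬G.Adj d0 d2) (n14 : ¬G.Adj d0 d3) (n15 : ¬G.Adj d0 d4) (n24 : ¬G.Adj d1 d3) (n25 : ¬G.Adj d1 d4) (n26 : ¬G.Adj d1 d5) (n35 : ¬G.Adj d2 d4) (n46 : ¬G.Adj d3 d5)
 (e13 : d0 ≠ d2) (e14 : d0 ≠ d3) (e15 : d0 ≠ d4) (e24 : d1 ≠ d3) (e25 : d1 ≠ d4) (e26 : d1 ≠ d5) (e35 : d2 ≠ d4) (e46 : d3 ≠ d5) : False := by
  have ee12 := a12.ne
  have s21 := a12.symm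
  have ee23 := a23.ne
  have s32 := a23.symm
  have ee34 := a34.ne
  have s43 := a34.symm
  have ee45 := a45.ne
  have s54 := a45.symm
  have ee16 := a16.ne
  have s61 := a16.symm
  have ee36 := a36.ne
  have s63 := a36.symm
  have ee56 := a56.ne
  have s65 := a56.symm
  have m31 : ¬G.Adj d2 d0 := fun h => n13 h.symm
  have m41 : ¬G.Adj d3 d0 := fun h => n14 h.symm
  have m51 : ¬G.Adj d4 d0 := fun h => n15 h.symm
  have m42 : ¬G.Adj d3 d1 := fun h => n24 h.symm
  have m52 : ¬G.Adj d4 d1 := fun h => n25 h.symm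
  have m62 : ¬G.Adj d5 d1 := fun h => n26 h.symm
  have m53 : ¬G.Adj d4 d2 := fun h => n35 h.symm
  have m64 : ¬G.Adj d5 d3 := fun h => n46 h.symm
  have l1 : ¬G.Adj d0 d0 := G.loopless.irrefl d0
  have l2 : ¬G.Adj d1 d1 := G.loopless.irrefl d1
  have l3 : ¬G.Adj d2 d2 := G.loopless.irrefl d2
  have l4 : ¬G.Adj d3 d3 := G.loopless.irrefl d3
  have l5 : ¬G.Adj d4 d4 := G.loopless.irrefl d4
  have l6 : ¬G.Adj d5 d5 := G.loopless.irrefl d5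
  refine hfree.false ⟨⟨pick6 d0 d1 d2 d3 d4 d5, ?_⟩, ?_⟩
  · intro a b h
    fin_cases a <;> fin_cases b <;> simp_all [pick6]
  · intro a b
    fin_cases a <;> fin_cases b <;> simp (config := { decide := true }) [domino, pick6, fromRel_adj] <;> assumption
lemma nadj_symm {G : SimpleGraph V} {u w : V} (h : ¬G.Adj u w) : ¬G.Adj w u := fun h2 => h h2.symm

lemma square_adj' {G : SimpleGraph V} {u w : V} (h : (square G).Adj u w) :
    u ≠ w ∧ (G.Adj u w ∨ ∃ z, G.Adj u z ∧ G.Adj z w) := h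

structure Nice (G : SimpleGraph V) (k : ℕ) (v : ZMod k → V) : Prop where
  h6 : _root_.Free G (pathGraph 6)
  hH : _root_.Free G house
  hhole : HoleFree G
  hdom : _root_.Free G domino
  hk : 4 ≤ k
  hinj : Function.Injective v
  hadj : ∀ i : ZMod k, (square G).Adj (v i) (v (i+1))
  hnon : ∀ i j : ZMod k, j ≠ i-1 → j ≠ i → j ≠ i+1 → ¬(square G).Adj (v i) (v j)

namespace Nice

variable {G : SimpleGraph V} {k : ℕ} {v : ZMod k → V}

lemma vne (C : Nice G k v) {p q : ZMod k} (h : p ≠ q) : v p ≠ v q := fun he => h (C.hinj he)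

lemma nzn (C : Nice G k v) (n : ℕ) (h1 : 0 < n) (h2 : n < k) : ((n:ℕ) : ZMod k) ≠ 0 := by
  intro h
  rw [ZMod.natCast_eq_zero_iff] at h
  exact absurd (Nat.le_of_dvd h1 h) (by omega)

lemma far (C : Nice G k v) (p q : ZMod k) (h1 : q ≠ p - 1) (h2 : q ≠ p) (h3 : q ≠ p + 1) :
    ¬G.Adj (v p) (v q) ∧ ∀ z, ¬(G.Adj (v p) z ∧ G.Adj z (v q)) := by
  have hn := C.hnon p q h1 h2 h3
  have hne : v p ≠ v q := C.vne (Ne.symm h2)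
  exact ⟨fun hA => hn ⟨hne, Or.inl hA⟩, fun z hz => hn ⟨hne, Or.inr ⟨z, hz.1, hz.2⟩⟩⟩

lemma mid (C : Nice G k v) (p : ZMod k) (hna : ¬G.Adj (v p) (v (p+1))) :
    ∃ z, G.Adj (v p) z ∧ G.Adj z (v (p+1)) := by
  rcases (square_adj' (C.hadj p)).2 with h | h
  · exact absurd h hna
  · exact h

lemma setup (C : Nice G k v) (p : ZMod k)
    (hc1 : (1 : ZMod k) ≠ 0) (hc2 : (2 : ZMod k) ≠ 0) (hc3 : (3 : ZMod k) ≠ 0)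
    (hA : G.Adj (v p) (v (p+1))) :
    ∃ x y : V, G.Adj (v (p-1)) x ∧ G.Adj x (v p) ∧ G.Adj (v (p+1)) y ∧ G.Adj y (v (p+2)) ∧
      G.Adj x y ∧
      ¬G.Adj (v (p-1)) (v p) ∧ ¬G.Adj (v (p+1)) (v (p+2)) ∧ ¬G.Adj (v (p-1)) (v (p+2)) ∧
      ¬G.Adj x (v (p+1)) ∧ ¬G.Adj x (v (p+2)) ∧ ¬G.Adj y (v p) ∧ ¬G.Adj y (v (p-1)) ∧
      ¬G.Adj (v (p-1)) (v (p+1)) ∧ ¬G.Adj (v p) (v (p+2)) ∧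
      v (p-1) ≠ v p ∧ v (p-1) ≠ v (p+1) ∧ v (p-1) ≠ v (p+2) ∧ v p ≠ v (p+2) ∧ v (p+1) ≠ v (p+2) ∧
      x ≠ v (p+1) ∧ x ≠ v (p+2) ∧ y ≠ v (p-1) ∧ y ≠ v p ∧ x ≠ y := by
  obtain ⟨Fac1, Fac2⟩ := C.far (p-1) (p+1) (fun h => hc3 (by linear_combination h))
    (fun h => hc2 (by linear_combination h)) (fun h => hc1 (by linear_combination h))
  obtain ⟨Fbd1, Fbd2⟩ := C.far p (p+2) (fun h => hc3 (by linear_combination h))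
    (fun h => hc2 (by linear_combination h)) (fun h => hc1 (by linear_combination h))
  have nab : ¬G.Adj (v (p-1)) (v p) := fun h => Fac2 (v p) ⟨h, hA⟩
  have ncd : ¬G.Adj (v (p+1)) (v (p+2)) := fun h => Fbd2 (v (p+1)) ⟨hA, h⟩
  have hsq1 := C.hadj (p-1); rw [show p-1+1 = p from by ring] at hsq1
  obtain ⟨x, hax, hxb⟩ : ∃ z, G.Adj (v (p-1)) z ∧ G.Adj z (v p) := by
    rcases (square_adj' hsq1).2 with h | h
    · exact absurd h nab
    · exact h
  obtain ⟨y, hcy, hyd⟩ : ∃ z, G.Adj (v (p+1)) z ∧ G.Adj z (v (p+2)) := by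
    have hsq2 := C.hadj (p+1); rw [show p+1+1 = p+2 from by ring] at hsq2
    rcases (square_adj' hsq2).2 with h | h
    · exact absurd h ncd
    · exact h
  have nxc : ¬G.Adj x (v (p+1)) := fun h => Fac2 x ⟨hax, h⟩
  have nxd : ¬G.Adj x (v (p+2)) := fun h => Fbd2 x ⟨hxb.symm, h⟩
  have nyb : ¬G.Adj y (v p) := fun h => Fbd2 y ⟨h.symm, hyd⟩
  have nya : ¬G.Adj y (v (p-1)) := fun h => Fac2 y ⟨h.symm, hcy.symm⟩
  have nac : ¬G.Adj (v (p-1)) (v (p+1)) := Fac1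
  have nbd : ¬G.Adj (v p) (v (p+2)) := Fbd1
  have eab : v (p-1) ≠ v p := C.vne (fun h => hc1 (by linear_combination -h))
  have eac : v (p-1) ≠ v (p+1) := C.vne (fun h => hc2 (by linear_combination -h))
  have ead : v (p-1) ≠ v (p+2) := C.vne (fun h => hc3 (by linear_combination -h))
  have ebd : v p ≠ v (p+2) := C.vne (fun h => hc2 (by linear_combination -h))
  have ecd : v (p+1) ≠ v (p+2) := C.vne (fun h => hc1 (by linear_combination -h))
  have exc : x ≠ v (p+1) := fun h => Fac1 (h ▸ hax)
  have exd : x ≠ v (p+2) := fun h => Fbd1 (h ▸ hxb.symm)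
  have eya : y ≠ v (p-1) := fun h => Fac1 ((h ▸ hcy).symm)
  have eyb : y ≠ v p := fun h => Fbd1 (h ▸ hyd)
  have exy : x ≠ y := fun h => nyb (h ▸ hxb)
  have hxy : G.Adj x y := by
    by_contra nxy
    by_cases had : G.Adj (v (p-1)) (v (p+2))
    · exact c6False (C.hhole 6 (by norm_num)) (v (p-1)) x (v p) (v (p+1)) y (v (p+2))
        hax hxb hA hcy hyd had
        nab nac (nadj_symm nya) nxc nxy nxd (nadj_symm nyb) nbd ncd
        eab eac (Ne.symm eya) exc exy exd (Ne.symm eyb) ebd ecd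
    · exact p6False C.h6 (v (p-1)) x (v p) (v (p+1)) y (v (p+2))
        hax hxb hA hcy hyd
        nab nac (nadj_symm nya) had nxc nxy nxd (nadj_symm nyb) nbd ncd
        eab eac (Ne.symm eya) ead exc exy exd (Ne.symm eyb) ebd ecd
  have nad : ¬G.Adj (v (p-1)) (v (p+2)) := by
    intro had
    exact dominoFalse C.hdom (v (p+2)) (v (p-1)) x (v p) (v (p+1)) y
      had.symm hax hxb hA hyd.symm hxy hcy
      (nadj_symm nxd) (nadj_symm nbd) (nadj_symm ncd) nab nac (nadj_symm nya) nxc (nadj_symm nyb)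
      (Ne.symm exd) (Ne.symm ebd) (Ne.symm ecd) eab eac (Ne.symm eya) exc (Ne.symm eyb)
  exact ⟨x, y, hax, hxb, hcy, hyd, hxy, nab, ncd, nad, nxc, nxd, nyb, nya,
    nac, nbd, eab, eac, ead, ebd, ecd, exc, exd, eya, eyb, exy⟩


lemma k4 (C : Nice G k v) (hk4 : k = 4) (p : ZMod k) (hA : G.Adj (v p) (v (p+1))) : False := by
  have hc1 : (1 : ZMod k) ≠ 0 := by simpa using C.nzn 1 (by norm_num) (by omega)
  have hc2 : (2 : ZMod k) ≠ 0 := by simpa using C.nzn 2 (by norm_num) (by omega)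
  have hc3 : (3 : ZMod k) ≠ 0 := by simpa using C.nzn 3 (by norm_num) (by omega)
  obtain ⟨x, y, hax, hxb, hcy, hyd, hxy, nab, ncd, nad, nxc, nxd, nyb, nya,
    nac, nbd, eab, eac, ead, ebd, ecd, exc, exd, eya, eyb, exy⟩ := C.setup p hc1 hc2 hc3 hA
  obtain ⟨Fac1, Fac2⟩ := C.far (p-1) (p+1) (fun h => hc3 (by linear_combination h))
    (fun h => hc2 (by linear_combination h)) (fun h => hc1 (by linear_combination h))
  obtain ⟨Fbd1, Fbd2⟩ := C.far p (p+2) (fun h => hc3 (by linear_combination h))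
    (fun h => hc2 (by linear_combination h)) (fun h => hc1 (by linear_combination h))
  have h40 : (4 : ZMod k) = 0 := by
    have h : ((4:ℕ) : ZMod k) = 0 := (ZMod.natCast_eq_zero_iff 4 k).mpr ⟨1, by omega⟩
    simpa using h
  have hsq := C.hadj (p+2)
  rw [show p+2+1 = p-1 from by linear_combination h40] at hsq
  obtain ⟨m, hdm, hma⟩ : ∃ z, G.Adj (v (p+2)) z ∧ G.Adj z (v (p-1)) := by
    rcases (square_adj' hsq).2 with h | h
    · exact absurd h (nadj_symm nad)
    · exact h
  have nmb : ¬G.Adj m (v p) := fun h => Fbd2 m ⟨h.symm, hdm.symm⟩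
  have nmc : ¬G.Adj m (v (p+1)) := fun h => Fac2 m ⟨hma.symm, h⟩
  have emb : m ≠ v p := fun h => Fbd1 ((h ▸ hdm).symm)
  have emc : m ≠ v (p+1) := fun h => Fac1 ((h ▸ hma).symm)
  have emx : m ≠ x := fun h => nxd (h ▸ hdm.symm)
  have emy : m ≠ y := fun h => nya (h ▸ hma)
  by_cases hmx : G.Adj m x
  · by_cases hmy : G.Adj m y
    · exact houseFalse C.hH x (v (p+1)) m (v p) y
        hmx.symm hxb hxy hA.symm hcy hmy
        nxc (nadj_symm nmc) nmb (nadj_symm nyb)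
        exc (Ne.symm emc) emb (Ne.symm eyb)
    · exact dominoFalse C.hdom m (v (p+2)) y (v (p+1)) (v p) x
        hdm.symm hyd.symm hcy.symm hA.symm hmx hxy.symm hxb.symm
        hmy nmc nmb (nadj_symm ncd) (nadj_symm nbd) (nadj_symm nxd) nyb (nadj_symm nxc)
        emy emc emb (Ne.symm ecd) (Ne.symm ebd) (Ne.symm exd) eyb (Ne.symm exc)
  · by_cases hmy : G.Adj m y
    · exact dominoFalse C.hdom m (v (p-1)) x (v p) (v (p+1)) y
        hma hax hxb hA hmy hxy hcy
        hmx nmb nmc nab nac (nadj_symm nya) nxc (nadj_symm nyb)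
        emx emb emc eab eac (Ne.symm eya) exc (Ne.symm eyb)
    · exact c5False (C.hhole 5 (by norm_num)) m (v (p-1)) x y (v (p+2))
        hma hax hxy hyd hdm.symm
        hmx hmy (nadj_symm nya) nad nxd
        emx emy (Ne.symm eya) ead exd

lemma k5 (C : Nice G k v) (hk5 : k = 5) (p : ZMod k) (hA : G.Adj (v p) (v (p+1))) : False := by
  have hc1 : (1 : ZMod k) ≠ 0 := by simpa using C.nzn 1 (by norm_num) (by omega)
  have hc2 : (2 : ZMod k) ≠ 0 := by simpa using C.nzn 2 (by norm_num) (by omega)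
  have hc3 : (3 : ZMod k) ≠ 0 := by simpa using C.nzn 3 (by norm_num) (by omega)
  have hc4 : (4 : ZMod k) ≠ 0 := by simpa using C.nzn 4 (by norm_num) (by omega)
  obtain ⟨x, y, hax, hxb, hcy, hyd, hxy, nab, ncd, nad, nxc, nxd, nyb, nya,
    nac, nbd, eab, eac, ead, ebd, ecd, exc, exd, eya, eyb, exy⟩ := C.setup p hc1 hc2 hc3 hA
  obtain ⟨Fac1, Fac2⟩ := C.far (p-1) (p+1) (fun h => hc3 (by linear_combination h))
    (fun h => hc2 (by linear_combination h)) (fun h => hc1 (by linear_combination h))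
  obtain ⟨Fbd1, Fbd2⟩ := C.far p (p+2) (fun h => hc3 (by linear_combination h))
    (fun h => hc2 (by linear_combination h)) (fun h => hc1 (by linear_combination h))
  obtain ⟨Fad1, Fad2⟩ := C.far (p-1) (p+2) (fun h => hc4 (by linear_combination h))
    (fun h => hc3 (by linear_combination h)) (fun h => hc2 (by linear_combination h))
  obtain ⟨Fbe1, Fbe2⟩ := C.far p (p+3) (fun h => hc4 (by linear_combination h))
    (fun h => hc3 (by linear_combination h)) (fun h => hc2 (by linear_combination h))
  obtain ⟨Fce1, Fce2⟩ := C.far (p+1) (p+3) (fun h => hc3 (by linear_combination h))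
    (fun h => hc2 (by linear_combination h)) (fun h => hc1 (by linear_combination h))
  have h50 : (5 : ZMod k) = 0 := by
    have h : ((5:ℕ) : ZMod k) = 0 := (ZMod.natCast_eq_zero_iff 5 k).mpr ⟨1, by omega⟩
    simpa using h
  have nxe : ¬G.Adj x (v (p+3)) := fun h => Fbe2 x ⟨hxb.symm, h⟩
  have nye : ¬G.Adj y (v (p+3)) := fun h => Fce2 y ⟨hcy, h⟩
  have exe : x ≠ v (p+3) := fun h => Fbe1 ((h ▸ hxb).symm)
  have eye : y ≠ v (p+3) := fun h => Fce1 ((h ▸ hcy.symm).symm)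
  have eea : v (p+3) ≠ v (p-1) := C.vne (fun h => hc4 (by linear_combination h))
  have eeb : v (p+3) ≠ v p := C.vne (fun h => hc3 (by linear_combination h))
  have ece : v (p+1) ≠ v (p+3) := C.vne (fun h => hc2 (by linear_combination -h))
  have ede : v (p+2) ≠ v (p+3) := C.vne (fun h => hc1 (by linear_combination -h))
  have hsqea := C.hadj (p+3)
  rw [show p+3+1 = p-1 from by linear_combination h50] at hsqea
  by_cases hde : G.Adj (v (p+2)) (v (p+3))
  · -- d ~ e
    have nea : ¬G.Adj (v (p+3)) (v (p-1)) := fun h => Fad2 (v (p+3)) ⟨h.symm, hde.symm⟩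
    obtain ⟨u, heu, hua⟩ : ∃ z, G.Adj (v (p+3)) z ∧ G.Adj z (v (p-1)) := by
      rcases (square_adj' hsqea).2 with h | h
      · exact absurd h nea
      · exact h
    have nub : ¬G.Adj u (v p) := fun h => Fbe2 u ⟨h.symm, heu.symm⟩
    have nuc : ¬G.Adj u (v (p+1)) := fun h => Fce2 u ⟨h.symm, heu.symm⟩
    have nud : ¬G.Adj u (v (p+2)) := fun h => Fad2 u ⟨hua.symm, h⟩
    have eub : u ≠ v p := fun h => nab ((h ▸ hua).symm)
    have euc : u ≠ v (p+1) := fun h => Fac1 ((h ▸ hua).symm)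
    have eud : u ≠ v (p+2) := fun h => Fad1 ((h ▸ hua).symm)
    have eux : u ≠ x := fun h => nxe ((h ▸ heu).symm)
    have euy : u ≠ y := fun h => nye ((h ▸ heu).symm)
    have hyu : G.Adj y u := by
      by_contra nyu
      exact p6False C.h6 (v (p+1)) y (v (p+2)) (v (p+3)) u (v (p-1))
        hcy hyd hde heu hua
        ncd Fce1 (nadj_symm nuc) (nadj_symm Fac1) nye nyu nya (nadj_symm nud)
          (nadj_symm Fad1) nea
        ecd ece (Ne.symm euc) (Ne.symm eac) eye (Ne.symm euy) eya
          (Ne.symm eud) (Ne.symm ead) eea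
    by_cases hux : G.Adj u x
    · exact houseFalse C.hH x (v (p+1)) u (v p) y
        hux.symm hxb hxy hA.symm hcy hyu.symm
        nxc (nadj_symm nuc) nub (nadj_symm nyb)
        exc (Ne.symm euc) eub (Ne.symm eyb)
    · exact dominoFalse C.hdom u (v (p-1)) x (v p) (v (p+1)) y
        hua hax hxb hA hyu.symm hxy hcy
        hux nub nuc nab nac (nadj_symm nya) nxc (nadj_symm nyb)
        eux eub euc eab eac (Ne.symm eya) exc (Ne.symm eyb)
  · -- dist(d,e) = 2
    obtain ⟨w, hdw, hwe⟩ : ∃ z, G.Adj (v (p+2)) z ∧ G.Adj z (v (p+3)) := by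
      have hsqde := C.hadj (p+2)
      rw [show p+2+1 = p+3 from by ring] at hsqde
      rcases (square_adj' hsqde).2 with h | h
      · exact absurd h hde
      · exact h
    have nwa : ¬G.Adj w (v (p-1)) := fun h => Fad2 w ⟨h.symm, hdw.symm⟩
    have nwb : ¬G.Adj w (v p) := fun h => Fbd2 w ⟨h.symm, hdw.symm⟩
    have nwc : ¬G.Adj w (v (p+1)) := fun h => Fce2 w ⟨h.symm, hwe⟩
    have ewa : w ≠ v (p-1) := fun h => Fad1 ((h ▸ hdw).symm)
    have ewb : w ≠ v p := fun h => Fbd1 ((h ▸ hdw).symm)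
    have ewc : w ≠ v (p+1) := fun h => Fce1 (h ▸ hwe)
    have ewx : w ≠ x := fun h => nxe (h ▸ hwe)
    have ewy : w ≠ y := fun h => nye (h ▸ hwe)
    have nwx : ¬G.Adj w x := by
      intro hwx
      by_cases hwy : G.Adj w y
      · exact houseFalse C.hH x (v (p+1)) w (v p) y
          hwx.symm hxb hxy hA.symm hcy hwy
          nxc (nadj_symm nwc) nwb (nadj_symm nyb)
          exc (Ne.symm ewc) ewb (Ne.symm eyb)
      · exact dominoFalse C.hdom w (v (p+2)) y (v (p+1)) (v p) x
          hdw.symm hyd.symm hcy.symm hA.symm hwx hxy.symm hxb.symm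
          hwy nwc nwb (nadj_symm ncd) (nadj_symm nbd) (nadj_symm nxd) nyb (nadj_symm nxc)
          ewy ewc ewb (Ne.symm ecd) (Ne.symm ebd) (Ne.symm exd) eyb (Ne.symm exc)
    by_cases hea : G.Adj (v (p+3)) (v (p-1))
    · exact p6False C.h6 (v (p+2)) w (v (p+3)) (v (p-1)) x (v p)
        hdw hwe hea hax hxb
        hde (nadj_symm nad) (nadj_symm nxd) (nadj_symm nbd) nwa nwx nwb
          (nadj_symm nxe) (nadj_symm Fbe1) nab
        ede (Ne.symm ead) (Ne.symm exd) (Ne.symm ebd) ewa ewx ewb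
          (Ne.symm exe) eeb eab
    · obtain ⟨u, heu, hua⟩ : ∃ z, G.Adj (v (p+3)) z ∧ G.Adj z (v (p-1)) := by
        rcases (square_adj' hsqea).2 with h | h
        · exact absurd h hea
        · exact h
      have nub : ¬G.Adj u (v p) := fun h => Fbe2 u ⟨h.symm, heu.symm⟩
      have nuc : ¬G.Adj u (v (p+1)) := fun h => Fce2 u ⟨h.symm, heu.symm⟩
      have nud : ¬G.Adj u (v (p+2)) := fun h => Fad2 u ⟨hua.symm, h⟩
      have eub : u ≠ v p := fun h => nab ((h ▸ hua).symm)
      have euc : u ≠ v (p+1) := fun h => Fac1 ((h ▸ hua).symm)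
      have eud : u ≠ v (p+2) := fun h => Fad1 ((h ▸ hua).symm)
      have eux : u ≠ x := fun h => nxe ((h ▸ heu).symm)
      have euy : u ≠ y := fun h => nye ((h ▸ heu).symm)
      have euw : u ≠ w := fun h => nwa (h ▸ hua)
      have nuy : ¬G.Adj u y := by
        intro huy
        by_cases hux : G.Adj u x
        · exact houseFalse C.hH x (v (p+1)) u (v p) y
            hux.symm hxb hxy hA.symm hcy huy
            nxc (nadj_symm nuc) nub (nadj_symm nyb)
            exc (Ne.symm euc) eub (Ne.symm eyb)
        · exact dominoFalse C.hdom u (v (p-1)) x (v p) (v (p+1)) y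
            hua hax hxb hA huy hxy hcy
            hux nub nuc nab nac (nadj_symm nya) nxc (nadj_symm nyb)
            eux eub euc eab eac (Ne.symm eya) exc (Ne.symm eyb)
      have hwy : G.Adj w y := by
        by_contra nwy
        exact p6False C.h6 (v (p-1)) x y (v (p+2)) w (v (p+3))
          hax hxy hyd hdw hwe
          (nadj_symm nya) nad (nadj_symm nwa) (nadj_symm hea) nxd (nadj_symm nwx) nxe
            (nadj_symm nwy) nye hde
          (Ne.symm eya) ead (Ne.symm ewa) (Ne.symm eea) exd (Ne.symm ewx) exe
            (Ne.symm ewy) eye ede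
      have hux : G.Adj u x := by
        by_contra nux
        exact p6False C.h6 (v (p+2)) y x (v (p-1)) u (v (p+3))
          hyd.symm hxy.symm hax.symm hua.symm heu.symm
          (nadj_symm nxd) (nadj_symm nad) (nadj_symm nud) hde nya (nadj_symm nuy) nye
            (nadj_symm nux) nxe (nadj_symm hea)
          (Ne.symm exd) (Ne.symm ead) (Ne.symm eud) ede eya (Ne.symm euy) eye
            (Ne.symm eux) exe (Ne.symm eea)
      by_cases huw : G.Adj u w
      · exact houseFalse C.hH w x (v (p+3)) y u
          hwe hwy huw.symm hxy hux.symm heu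
          nwx nxe (nadj_symm nye) (nadj_symm nuy)
          ewx exe (Ne.symm eye) (Ne.symm euy)
      · exact c5False (C.hhole 5 (by norm_num)) (v (p+3)) u x y w
          heu hux hxy hwy.symm hwe.symm
          (nadj_symm nxe) (nadj_symm nye) nuy huw (nadj_symm nwx)
          (Ne.symm exe) (Ne.symm eye) euy euw (Ne.symm ewx)

lemma E2 (C : Nice G k v) (hk6 : 6 ≤ k) (p : ZMod k)
    (h1 : G.Adj (v p) (v (p+1))) (h2 : G.Adj (v (p+2)) (v (p+3))) : False := by
  have hc1 : (1 : ZMod k) ≠ 0 := by simpa using C.nzn 1 (by norm_num) (by omega)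
  have hc2 : (2 : ZMod k) ≠ 0 := by simpa using C.nzn 2 (by norm_num) (by omega)
  have hc3 : (3 : ZMod k) ≠ 0 := by simpa using C.nzn 3 (by norm_num) (by omega)
  have hc4 : (4 : ZMod k) ≠ 0 := by simpa using C.nzn 4 (by norm_num) (by omega)
  have hc5 : (5 : ZMod k) ≠ 0 := by simpa using C.nzn 5 (by norm_num) (by omega)
  obtain ⟨x, y, hax, hxb, hcy, hyd, hxy, nab, ncd, nad, nxc, nxd, nyb, nya,
    nac, nbd, eab, eac, ead, ebd, ecd, exc, exd, eya, eyb, exy⟩ := C.setup p hc1 hc2 hc3 h1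
  obtain ⟨Fac1, Fac2⟩ := C.far (p-1) (p+1) (fun h => hc3 (by linear_combination h))
    (fun h => hc2 (by linear_combination h)) (fun h => hc1 (by linear_combination h))
  obtain ⟨Fbd1, Fbd2⟩ := C.far p (p+2) (fun h => hc3 (by linear_combination h))
    (fun h => hc2 (by linear_combination h)) (fun h => hc1 (by linear_combination h))
  obtain ⟨Fad1, Fad2⟩ := C.far (p-1) (p+2) (fun h => hc4 (by linear_combination h))
    (fun h => hc3 (by linear_combination h)) (fun h => hc2 (by linear_combination h))
  obtain ⟨Fbe1, Fbe2⟩ := C.far p (p+3) (fun h => hc4 (by linear_combination h))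
    (fun h => hc3 (by linear_combination h)) (fun h => hc2 (by linear_combination h))
  obtain ⟨Fce1, Fce2⟩ := C.far (p+1) (p+3) (fun h => hc3 (by linear_combination h))
    (fun h => hc2 (by linear_combination h)) (fun h => hc1 (by linear_combination h))
  obtain ⟨Fae1, Fae2⟩ := C.far (p-1) (p+3) (fun h => hc5 (by linear_combination h))
    (fun h => hc4 (by linear_combination h)) (fun h => hc3 (by linear_combination h))
  obtain ⟨Ffb1, Ffb2⟩ := C.far (p-2) p (fun h => hc3 (by linear_combination h))
    (fun h => hc2 (by linear_combination h)) (fun h => hc1 (by linear_combination h))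
  obtain ⟨Ffc1, Ffc2⟩ := C.far (p-2) (p+1) (fun h => hc4 (by linear_combination h))
    (fun h => hc3 (by linear_combination h)) (fun h => hc2 (by linear_combination h))
  obtain ⟨Ffd1, Ffd2⟩ := C.far (p-2) (p+2) (fun h => hc5 (by linear_combination h))
    (fun h => hc4 (by linear_combination h)) (fun h => hc3 (by linear_combination h))
  have nxe : ¬G.Adj x (v (p+3)) := fun h => Fbe2 x ⟨hxb.symm, h⟩
  have nye : ¬G.Adj y (v (p+3)) := fun h => Fce2 y ⟨hcy, h⟩
  have nfx : ¬G.Adj (v (p-2)) x := fun h => Ffb2 x ⟨h, hxb⟩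
  have nfy : ¬G.Adj (v (p-2)) y := fun h => Ffc2 y ⟨h, hcy.symm⟩
  have nef : ¬G.Adj (v (p+3)) (v (p-2)) := fun h => Ffd2 (v (p+3)) ⟨h.symm, h2.symm⟩
  have exe : x ≠ v (p+3) := fun h => Fbe1 ((h ▸ hxb).symm)
  have eye : y ≠ v (p+3) := fun h => Fce1 ((h ▸ hcy.symm).symm)
  have efx : v (p-2) ≠ x := fun h => Ffb1 (h.symm ▸ hxb)
  have efy : v (p-2) ≠ y := fun h => Ffc1 (h.symm ▸ hcy.symm)
  have efd : v (p-2) ≠ v (p+2) := C.vne (fun h => hc4 (by linear_combination -h))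
  have efe : v (p-2) ≠ v (p+3) := C.vne (fun h => hc5 (by linear_combination -h))
  have eae : v (p-1) ≠ v (p+3) := C.vne (fun h => hc4 (by linear_combination -h))
  have eye' : v (p+1) ≠ v (p+3) := C.vne (fun h => hc2 (by linear_combination -h))
  by_cases hfa : G.Adj (v (p-2)) (v (p-1))
  · exact p6False C.h6 (v (p-2)) (v (p-1)) x y (v (p+2)) (v (p+3))
      hfa hax hxy hyd h2
      nfx nfy Ffd1 (nadj_symm nef) (nadj_symm nya) nad Fae1 nxd nxe nye
      efx efy efd efe (Ne.symm eya) ead eae exd exe eye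
  · obtain ⟨m, hfm, hma⟩ : ∃ z, G.Adj (v (p-2)) z ∧ G.Adj z (v (p-1)) := by
      have hsqfa := C.hadj (p-2)
      rw [show p-2+1 = p-1 from by ring] at hsqfa
      rcases (square_adj' hsqfa).2 with h | h
      · exact absurd h hfa
      · exact h
    have nmb : ¬G.Adj m (v p) := fun h => Ffb2 m ⟨hfm, h⟩
    have nmc : ¬G.Adj m (v (p+1)) := fun h => Fac2 m ⟨hma.symm, h⟩
    have nmd : ¬G.Adj m (v (p+2)) := fun h => Ffd2 m ⟨hfm, h⟩
    have nme : ¬G.Adj m (v (p+3)) := fun h => Fae2 m ⟨hma.symm, h⟩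
    have emb : m ≠ v p := fun h => Ffb1 (h ▸ hfm)
    have emc : m ≠ v (p+1) := fun h => Fac1 ((h ▸ hma).symm)
    have emx : m ≠ x := fun h => nfx (h ▸ hfm)
    have emy : m ≠ y := fun h => nya (h ▸ hma)
    have emd : m ≠ v (p+2) := fun h => nad ((h ▸ hma).symm)
    have eme : m ≠ v (p+3) := fun h => Fae1 ((h ▸ hma).symm)
    have nmy : ¬G.Adj m y := by
      intro hmy
      by_cases hmx : G.Adj m x
      · exact houseFalse C.hH x (v (p+1)) m (v p) y
          hmx.symm hxb hxy h1.symm hcy hmy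
          nxc (nadj_symm nmc) nmb (nadj_symm nyb)
          exc (Ne.symm emc) emb (Ne.symm eyb)
      · exact dominoFalse C.hdom m (v (p-1)) x (v p) (v (p+1)) y
          hma hax hxb h1 hmy hxy hcy
          hmx nmb nmc nab nac (nadj_symm nya) nxc (nadj_symm nyb)
          emx emb emc eab eac (Ne.symm eya) exc (Ne.symm eyb)
    by_cases hmx : G.Adj m x
    · exact p6False C.h6 (v (p-2)) m x y (v (p+2)) (v (p+3))
        hfm hmx hxy hyd h2
        nfx nfy Ffd1 (nadj_symm nef) nmy nmd nme nxd nxe nye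
        efx efy efd efe emy emd eme exd exe eye
    · exact p6False C.h6 m (v (p-1)) x y (v (p+2)) (v (p+3))
        hma hax hxy hyd h2
        hmx nmy nmd nme (nadj_symm nya) nad Fae1 nxd nxe nye
        emx emy emd eme (Ne.symm eya) ead eae exd exe eye

lemma k6 (C : Nice G k v) (hk6 : 6 ≤ k) (p : ZMod k) (hA : G.Adj (v p) (v (p+1))) : False := by
  have hc1 : (1 : ZMod k) ≠ 0 := by simpa using C.nzn 1 (by norm_num) (by omega)
  have hc2 : (2 : ZMod k) ≠ 0 := by simpa using C.nzn 2 (by norm_num) (by omega)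
  have hc3 : (3 : ZMod k) ≠ 0 := by simpa using C.nzn 3 (by norm_num) (by omega)
  have hc4 : (4 : ZMod k) ≠ 0 := by simpa using C.nzn 4 (by norm_num) (by omega)
  have hc5 : (5 : ZMod k) ≠ 0 := by simpa using C.nzn 5 (by norm_num) (by omega)
  obtain ⟨x, y, hax, hxb, hcy, hyd, hxy, nab, ncd, nad, nxc, nxd, nyb, nya,
    nac, nbd, eab, eac, ead, ebd, ecd, exc, exd, eya, eyb, exy⟩ := C.setup p hc1 hc2 hc3 hA
  obtain ⟨Fac1, Fac2⟩ := C.far (p-1) (p+1) (fun h => hc3 (by linear_combination h))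
    (fun h => hc2 (by linear_combination h)) (fun h => hc1 (by linear_combination h))
  obtain ⟨Fbd1, Fbd2⟩ := C.far p (p+2) (fun h => hc3 (by linear_combination h))
    (fun h => hc2 (by linear_combination h)) (fun h => hc1 (by linear_combination h))
  obtain ⟨Fad1, Fad2⟩ := C.far (p-1) (p+2) (fun h => hc4 (by linear_combination h))
    (fun h => hc3 (by linear_combination h)) (fun h => hc2 (by linear_combination h))
  obtain ⟨Fbe1, Fbe2⟩ := C.far p (p+3) (fun h => hc4 (by linear_combination h))
    (fun h => hc3 (by linear_combination h)) (fun h => hc2 (by linear_combination h))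
  obtain ⟨Fce1, Fce2⟩ := C.far (p+1) (p+3) (fun h => hc3 (by linear_combination h))
    (fun h => hc2 (by linear_combination h)) (fun h => hc1 (by linear_combination h))
  obtain ⟨Fae1, Fae2⟩ := C.far (p-1) (p+3) (fun h => hc5 (by linear_combination h))
    (fun h => hc4 (by linear_combination h)) (fun h => hc3 (by linear_combination h))
  obtain ⟨Ffb1, Ffb2⟩ := C.far (p-2) p (fun h => hc3 (by linear_combination h))
    (fun h => hc2 (by linear_combination h)) (fun h => hc1 (by linear_combination h))
  obtain ⟨Ffc1, Ffc2⟩ := C.far (p-2) (p+1) (fun h => hc4 (by linear_combination h))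
    (fun h => hc3 (by linear_combination h)) (fun h => hc2 (by linear_combination h))
  obtain ⟨Ffd1, Ffd2⟩ := C.far (p-2) (p+2) (fun h => hc5 (by linear_combination h))
    (fun h => hc4 (by linear_combination h)) (fun h => hc3 (by linear_combination h))
  have nxe : ¬G.Adj x (v (p+3)) := fun h => Fbe2 x ⟨hxb.symm, h⟩
  have nye : ¬G.Adj y (v (p+3)) := fun h => Fce2 y ⟨hcy, h⟩
  have nfx : ¬G.Adj (v (p-2)) x := fun h => Ffb2 x ⟨h, hxb⟩
  have nfy : ¬G.Adj (v (p-2)) y := fun h => Ffc2 y ⟨h, hcy.symm⟩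
  have exe : x ≠ v (p+3) := fun h => Fbe1 ((h ▸ hxb).symm)
  have eye : y ≠ v (p+3) := fun h => Fce1 ((h ▸ hcy.symm).symm)
  have efx : v (p-2) ≠ x := fun h => Ffb1 (h.symm ▸ hxb)
  have efy : v (p-2) ≠ y := fun h => Ffc1 (h.symm ▸ hcy.symm)
  have efd : v (p-2) ≠ v (p+2) := C.vne (fun h => hc4 (by linear_combination -h))
  have efe : v (p-2) ≠ v (p+3) := C.vne (fun h => hc5 (by linear_combination -h))
  have eae : v (p-1) ≠ v (p+3) := C.vne (fun h => hc4 (by linear_combination -h))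
  have eaf : v (p-1) ≠ v (p-2) := C.vne (fun h => hc1 (by linear_combination h))
  have ede : v (p+2) ≠ v (p+3) := C.vne (fun h => hc1 (by linear_combination -h))
  -- no double edge (E2)
  have hde : ¬G.Adj (v (p+2)) (v (p+3)) := fun h => C.E2 hk6 p hA h
  obtain ⟨w, hdw, hwe⟩ : ∃ z, G.Adj (v (p+2)) z ∧ G.Adj z (v (p+3)) := by
    have hsqde := C.hadj (p+2)
    rw [show p+2+1 = p+3 from by ring] at hsqde
    rcases (square_adj' hsqde).2 with h | h
    · exact absurd h hde
    · exact h
  have nwa : ¬G.Adj w (v (p-1)) := fun h => Fad2 w ⟨h.symm, hdw.symm⟩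
  have nwb : ¬G.Adj w (v p) := fun h => Fbd2 w ⟨h.symm, hdw.symm⟩
  have nwc : ¬G.Adj w (v (p+1)) := fun h => Fce2 w ⟨h.symm, hwe⟩
  have nwf : ¬G.Adj w (v (p-2)) := fun h => Ffd2 w ⟨h.symm, hdw.symm⟩
  have ewa : w ≠ v (p-1) := fun h => Fad1 ((h ▸ hdw).symm)
  have ewb : w ≠ v p := fun h => Fbd1 ((h ▸ hdw).symm)
  have ewc : w ≠ v (p+1) := fun h => Fce1 (h ▸ hwe)
  have ewf : w ≠ v (p-2) := fun h => Ffd1 ((h ▸ hdw).symm)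
  have ewx : w ≠ x := fun h => nxe (h ▸ hwe)
  have ewy : w ≠ y := fun h => nye (h ▸ hwe)
  have nwx : ¬G.Adj w x := by
    intro hwx
    by_cases hwy : G.Adj w y
    · exact houseFalse C.hH x (v (p+1)) w (v p) y
        hwx.symm hxb hxy hA.symm hcy hwy
        nxc (nadj_symm nwc) nwb (nadj_symm nyb)
        exc (Ne.symm ewc) ewb (Ne.symm eyb)
    · exact dominoFalse C.hdom w (v (p+2)) y (v (p+1)) (v p) x
        hdw.symm hyd.symm hcy.symm hA.symm hwx hxy.symm hxb.symm
        hwy nwc nwb (nadj_symm ncd) (nadj_symm nbd) (nadj_symm nxd) nyb (nadj_symm nxc)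
        ewy ewc ewb (Ne.symm ecd) (Ne.symm ebd) (Ne.symm exd) eyb (Ne.symm exc)
  have hwy : G.Adj w y := by
    by_contra nwy
    exact p6False C.h6 (v (p-1)) x y (v (p+2)) w (v (p+3))
      hax hxy hyd hdw hwe
      (nadj_symm nya) nad (nadj_symm nwa) Fae1 nxd (nadj_symm nwx) nxe
        (nadj_symm nwy) nye hde
      (Ne.symm eya) ead (Ne.symm ewa) eae exd (Ne.symm ewx) exe
        (Ne.symm ewy) eye ede
  have nfa : ¬G.Adj (v (p-2)) (v (p-1)) := by
    intro hfa
    apply C.E2 hk6 (p-2) (by rw [show p-2+1 = p-1 from by ring]; exact hfa)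
    rw [show p-2+2 = p from by ring, show p-2+3 = p+1 from by ring]
    exact hA
  obtain ⟨m, hfm, hma⟩ : ∃ z, G.Adj (v (p-2)) z ∧ G.Adj z (v (p-1)) := by
    have hsqfa := C.hadj (p-2)
    rw [show p-2+1 = p-1 from by ring] at hsqfa
    rcases (square_adj' hsqfa).2 with h | h
    · exact absurd h nfa
    · exact h
  have nmb : ¬G.Adj m (v p) := fun h => Ffb2 m ⟨hfm, h⟩
  have nmc : ¬G.Adj m (v (p+1)) := fun h => Fac2 m ⟨hma.symm, h⟩
  have nmd : ¬G.Adj m (v (p+2)) := fun h => Ffd2 m ⟨hfm, h⟩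
  have nme : ¬G.Adj m (v (p+3)) := fun h => Fae2 m ⟨hma.symm, h⟩
  have emb : m ≠ v p := fun h => Ffb1 (h ▸ hfm)
  have emc : m ≠ v (p+1) := fun h => Fac1 ((h ▸ hma).symm)
  have emx : m ≠ x := fun h => nfx (h ▸ hfm)
  have emy : m ≠ y := fun h => nya (h ▸ hma)
  have emd : m ≠ v (p+2) := fun h => nad ((h ▸ hma).symm)
  have eme : m ≠ v (p+3) := fun h => Fae1 ((h ▸ hma).symm)
  have emw : m ≠ w := fun h => nwa (h ▸ hma)
  have nmy : ¬G.Adj m y := by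
    intro hmy
    by_cases hmx : G.Adj m x
    · exact houseFalse C.hH x (v (p+1)) m (v p) y
        hmx.symm hxb hxy hA.symm hcy hmy
        nxc (nadj_symm nmc) nmb (nadj_symm nyb)
        exc (Ne.symm emc) emb (Ne.symm eyb)
    · exact dominoFalse C.hdom m (v (p-1)) x (v p) (v (p+1)) y
        hma hax hxb hA hmy hxy hcy
        hmx nmb nmc nab nac (nadj_symm nya) nxc (nadj_symm nyb)
        emx emb emc eab eac (Ne.symm eya) exc (Ne.symm eyb)
  have hmx : G.Adj m x := by
    by_contra nmx
    exact p6False C.h6 (v (p+2)) y x (v (p-1)) m (v (p-2))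
      hyd.symm hxy.symm hax.symm hma.symm hfm.symm
      (nadj_symm nxd) (nadj_symm nad) (nadj_symm nmd) (nadj_symm Ffd1) nya (nadj_symm nmy)
        (nadj_symm nfy) (nadj_symm nmx) (nadj_symm nfx) (nadj_symm nfa)
      (Ne.symm exd) (Ne.symm ead) (Ne.symm emd) (Ne.symm efd) eya (Ne.symm emy)
        (Ne.symm efy) (Ne.symm emx) (Ne.symm efx) eaf
  by_cases hmw : G.Adj m w
  · exact houseFalse C.hH m y (v (p-1)) w x
      hma hmw hmx hwy.symm hxy.symm hax
      nmy nya (nadj_symm nwa) nwx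
      emy eya (Ne.symm ewa) ewx
  · by_cases hef : G.Adj (v (p+3)) (v (p-2))
    · exact p6False C.h6 (v (p+2)) w (v (p+3)) (v (p-2)) m (v (p-1))
        hdw hwe hef hfm hma
        hde (nadj_symm Ffd1) (nadj_symm nmd) (nadj_symm nad) nwf (nadj_symm hmw) nwa
          (nadj_symm nme) (nadj_symm Fae1) nfa
        ede (Ne.symm efd) (Ne.symm emd) (Ne.symm ead) ewf (Ne.symm emw) ewa
          (Ne.symm eme) (Ne.symm eae) (Ne.symm eaf)
    · exact p6False C.h6 (v (p-2)) m x y w (v (p+3))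
        hfm hmx hxy hwy.symm hwe
        nfx nfy (nadj_symm nwf) (nadj_symm hef) nmy hmw nme (nadj_symm nwx) nxe nye
        efx efy (Ne.symm ewf) efe emy emw eme (Ne.symm ewx) exe eye

end Nice

theorem stmt3 (G : SimpleGraph V) (h6 : _root_.Free G (pathGraph 6)) (hH : _root_.Free G house)
    (hhole : HoleFree G) (hdom : _root_.Free G domino)
    (D : Set V) (hED : IsEDS G D)
    (k : ℕ) (hk : 4 ≤ k) (v : ZMod k → V) (hinj : Function.Injective v)
    (hadj : ∀ i : ZMod k, (square G).Adj (v i) (v (i + 1)))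
    (hnon : ∀ i j : ZMod k, j ≠ i - 1 → j ≠ i → j ≠ i + 1 → ¬ (square G).Adj (v i) (v j)) :
    ∀ i : ZMod k, G.dist (v i) (v (i + 1)) = 2 := by
  have C : Nice G k v := ⟨h6, hH, hhole, hdom, hk, hinj, hadj, hnon⟩
  intro i
  have hno : ¬ G.Adj (v i) (v (i+1)) := by
    intro hAdj
    rcases Nat.lt_or_ge k 6 with h | h
    · have h45 : k = 4 ∨ k = 5 := by omega
      rcases h45 with h4 | h5
      · exact C.k4 h4 i hAdj
      · exact C.k5 h5 i hAdj
    · exact C.k6 h i hAdj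
  obtain ⟨hne, hor⟩ := square_adj' (hadj i)
  rcases hor with hAdj | ⟨z, h1, h2⟩
  · exact absurd hAdj hno
  · have hle : G.dist (v i) (v (i+1)) ≤ 2 := by
      have hd := SimpleGraph.dist_le (Walk.cons h1 (Walk.cons h2 Walk.nil))
      simpa using hd
    have hpos : 0 < G.dist (v i) (v (i+1)) :=
      SimpleGraph.Reachable.pos_dist_of_ne ⟨Walk.cons h1 (Walk.cons h2 Walk.nil)⟩ hne
    have hne1 : G.dist (v i) (v (i+1)) ≠ 1 := by
      rw [Ne, SimpleGraph.dist_eq_one_iff_adj]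
      exact hno
    omega
end

section
/- Let G be a (P₆, house, hole, domino)-free graph, and suppose G² contains an induced C_k (k ≥ 4) with real vertices v₁,...,v_k all at pairwise G-distance 2 for consecutive vertices, with auxiliary vertices x_i adjacent in G to v_i and v_{i+1}. Then x_i x_{i+1} ∈ E(G) for all i (indices mod k). -/
open SimpleGraph Finset

variable {V : Type*}

lemma house_adj {u u' : Fin 5} :
    house.Adj u u' ↔ u ≠ u' ∧ ¬(u.val + 1 = u'.val ∨ u'.val + 1 = u.val) := by
  rw [house, compl_adj, pathGraph_adj]

set_option maxHeartbeats 3200000 in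
theorem stmt4 (G : SimpleGraph V) (h6 : _root_.Free G (pathGraph 6)) (hH : _root_.Free G house)
    (hhole : HoleFree G) (hdom : _root_.Free G domino)
    (k : ℕ) (hk : 4 ≤ k) (v : ZMod k → V) (hinj : Function.Injective v)
    (hadj : ∀ i : ZMod k, (square G).Adj (v i) (v (i + 1)))
    (hnon : ∀ i j : ZMod k, j ≠ i - 1 → j ≠ i → j ≠ i + 1 → ¬ (square G).Adj (v i) (v j))
    (x : ZMod k → V) (hd2 : ∀ i : ZMod k, G.dist (v i) (v (i + 1)) = 2)
    (hx : ∀ i : ZMod k, G.Adj (v i) (x i) ∧ G.Adj (x i) (v (i + 1))) :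
    ∀ i : ZMod k, G.Adj (x i) (x (i + 1)) := by
  have hk0 : NeZero k := ⟨by omega⟩
  have hz : ∀ m : ℕ, 0 < m → m < 4 → ((m : ℕ) : ZMod k) ≠ 0 := by
    intro m hm1 hm2 h
    rw [ZMod.natCast_eq_zero_iff] at h
    have := Nat.le_of_dvd hm1 h
    omega
  have h1z : (1 : ZMod k) ≠ 0 := by have := hz 1 one_pos (by omega); simpa using this
  have h2z : (2 : ZMod k) ≠ 0 := by have := hz 2 (by omega) (by omega); simpa using this
  have h3z : (3 : ZMod k) ≠ 0 := by have := hz 3 (by omega) (by omega); simpa using this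
  -- no two (distinct or not) real vertices are adjacent in G
  have hA : ∀ s t : ZMod k, ¬ G.Adj (v s) (v t) := by
    intro s t h
    by_cases h1 : t = s + 1
    · subst h1
      have := (SimpleGraph.dist_eq_one_iff_adj).mpr h
      have h2 := hd2 s
      omega
    · by_cases h2 : s = t + 1
      · subst h2
        have := (SimpleGraph.dist_eq_one_iff_adj).mpr h.symm
        have h2 := hd2 t
        omega
      · by_cases h3 : t = s
        · subst h3; exact G.loopless.irrefl _ h
        · exact hnon s t (fun hh => h2 (by rw [hh]; ring)) h3 h1
            ⟨fun he => h3 (hinj he).symm, Or.inl h⟩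
  have hfar : ∀ s t : ZMod k, t ≠ s - 1 → t ≠ s → t ≠ s + 1 →
      ∀ w, G.Adj (v s) w → G.Adj w (v t) → False := by
    intro s t ht1 ht2 ht3 w hw1 hw2
    exact hnon s t ht1 ht2 ht3 ⟨fun he => ht2 (hinj he).symm, Or.inr ⟨w, hw1, hw2⟩⟩
  intro i
  by_contra hxx
  -- adjacency facts
  have hap : G.Adj (v i) (x i) := (hx i).1
  have hpb : G.Adj (x i) (v (i+1)) := (hx i).2
  have hbq : G.Adj (v (i+1)) (x (i+1)) := (hx (i+1)).1
  have hqc : G.Adj (x (i+1)) (v (i+1+1)) := (hx (i+1)).2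
  have hdr : G.Adj (v (i-1)) (x (i-1)) := (hx (i-1)).1
  have hra : G.Adj (x (i-1)) (v i) := by
    have h := (hx (i-1)).2; rwa [show i - 1 + 1 = i by ring] at h
  -- far pairs
  have far1 : ∀ w, G.Adj (v i) w → G.Adj w (v (i+1+1)) → False :=
    hfar i (i+1+1) (fun h => h3z (by linear_combination h))
      (fun h => h2z (by linear_combination h)) (fun h => h1z (by linear_combination h))
  have far2 : ∀ w, G.Adj (v (i-1)) w → G.Adj w (v (i+1)) → False :=
    hfar (i-1) (i+1) (fun h => h3z (by linear_combination h))
      (fun h => h2z (by linear_combination h)) (fun h => h1z (by linear_combination h))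
  -- non-adjacency facts
  have nab : ¬ G.Adj (v i) (v (i+1)) := hA _ _
  have nac : ¬ G.Adj (v i) (v (i+1+1)) := hA _ _
  have nad : ¬ G.Adj (v i) (v (i-1)) := hA _ _
  have nbc : ¬ G.Adj (v (i+1)) (v (i+1+1)) := hA _ _
  have nbd : ¬ G.Adj (v (i+1)) (v (i-1)) := hA _ _
  have ncd : ¬ G.Adj (v (i+1+1)) (v (i-1)) := hA _ _
  have npc : ¬ G.Adj (x i) (v (i+1+1)) := fun h => far1 (x i) hap h
  have naq : ¬ G.Adj (v i) (x (i+1)) := fun h => far1 (x (i+1)) h hqc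
  have nrb : ¬ G.Adj (x (i-1)) (v (i+1)) := fun h => far2 (x (i-1)) hdr h
  have ndp : ¬ G.Adj (v (i-1)) (x i) := fun h => far2 (x i) h hpb
  have ndq : ¬ G.Adj (v (i-1)) (x (i+1)) := fun h => far2 (x (i+1)) h hbq.symm
  -- distinctness facts
  have eV : ∀ s t : ZMod k, s ≠ t → v s ≠ v t := fun s t h he => h (hinj he)
  have eab : v i ≠ v (i+1) := eV _ _ (fun h => h1z (by linear_combination -h))
  have eac : v i ≠ v (i+1+1) := eV _ _ (fun h => h2z (by linear_combination -h))
  have ead : v i ≠ v (i-1) := eV _ _ (fun h => h1z (by linear_combination h))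
  have ebc : v (i+1) ≠ v (i+1+1) := eV _ _ (fun h => h1z (by linear_combination -h))
  have ebd : v (i+1) ≠ v (i-1) := eV _ _ (fun h => h2z (by linear_combination h))
  have ecd : v (i+1+1) ≠ v (i-1) := eV _ _ (fun h => h3z (by linear_combination h))
  have eap : v i ≠ x i := hap.ne
  have epb : x i ≠ v (i+1) := hpb.ne
  have epc : x i ≠ v (i+1+1) := fun h => nac (h ▸ hap)
  have epd : x i ≠ v (i-1) := fun h => nbd (h ▸ hpb).symm
  have eaq : v i ≠ x (i+1) := fun h => nac (h ▸ hqc)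
  have ebq : v (i+1) ≠ x (i+1) := hbq.ne
  have eqc : x (i+1) ≠ v (i+1+1) := hqc.ne
  have eqd : x (i+1) ≠ v (i-1) := fun h => nbd (h ▸ hbq)
  have era : x (i-1) ≠ v i := hra.ne
  have erb : x (i-1) ≠ v (i+1) := fun h => nab (h ▸ hra).symm
  have erc : x (i-1) ≠ v (i+1+1) := fun h => nac (h ▸ hra).symm
  have erd : v (i-1) ≠ x (i-1) := hdr.ne
  have epq : x i ≠ x (i+1) := fun h => naq (h ▸ hap)
  have epr : x i ≠ x (i-1) := fun h => ndp (h.symm ▸ hdr)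
  have eqr : x (i+1) ≠ x (i-1) := fun h => nrb (h ▸ hbq.symm)
  by_cases hrq : G.Adj (x (i-1)) (x (i+1))
  · by_cases hrp : G.Adj (x (i-1)) (x i)
    · -- house on p q a b r  (0↦p 1↦q 2↦a 3↦b 4↦r)
      refine hH.false ⟨⟨![x i, x (i+1), v i, v (i+1), x (i-1)], ?_⟩, ?_⟩
      · intro u u'
        fin_cases u <;> fin_cases u' <;> intro h <;>
          first
          | rfl
          | exact absurd h epq | exact absurd h.symm epq
          | exact absurd h eap | exact absurd h.symm eap
          | exact absurd h epb | exact absurd h.symm epb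
          | exact absurd h epr | exact absurd h.symm epr
          | exact absurd h eaq | exact absurd h.symm eaq
          | exact absurd h ebq | exact absurd h.symm ebq
          | exact absurd h eqr | exact absurd h.symm eqr
          | exact absurd h eab | exact absurd h.symm eab
          | exact absurd h era | exact absurd h.symm era
          | exact absurd h erb | exact absurd h.symm erb
      · intro u u'
        change G.Adj (Matrix.vecCons _ _ u) (Matrix.vecCons _ _ u') ↔ _
        fin_cases u <;> fin_cases u' <;>
          first
          | exact iff_of_true (by first
              | exact hap | exact hap.symm | exact hpb | exact hpb.symm
              | exact hbq | exact hbq.symm | exact hra | exact hra.symm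
              | exact hrq | exact hrq.symm | exact hrp | exact hrp.symm)
              (by rw [house_adj]; decide)
          | exact iff_of_false (by first
              | exact hxx | exact fun hh => hxx hh.symm
              | exact naq | exact fun hh => naq hh.symm
              | exact nab | exact fun hh => nab hh.symm
              | exact nrb | exact fun hh => nrb hh.symm)
              (by rw [house_adj]; decide)
          | exact iff_of_false (G.loopless.irrefl _)
              (by rw [house_adj]; decide)
    · -- C5 on a p b q r
      refine ((hhole 5 (by norm_num)).false) ⟨⟨![v i, x i, v (i+1), x (i+1), x (i-1)], ?_⟩, ?_⟩
      · intro u u'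
        fin_cases u <;> fin_cases u' <;> intro h <;>
          first
          | rfl
          | exact absurd h eap | exact absurd h.symm eap
          | exact absurd h eab | exact absurd h.symm eab
          | exact absurd h eaq | exact absurd h.symm eaq
          | exact absurd h era | exact absurd h.symm era
          | exact absurd h epb | exact absurd h.symm epb
          | exact absurd h epq | exact absurd h.symm epq
          | exact absurd h epr | exact absurd h.symm epr
          | exact absurd h ebq | exact absurd h.symm ebq
          | exact absurd h erb | exact absurd h.symm erb
          | exact absurd h eqr | exact absurd h.symm eqr
      · intro u u'
        change G.Adj (Matrix.vecCons _ _ u) (Matrix.vecCons _ _ u') ↔ _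
        fin_cases u <;> fin_cases u' <;>
          first
          | exact iff_of_true (by first
              | exact hap | exact hap.symm | exact hpb | exact hpb.symm
              | exact hbq | exact hbq.symm | exact hrq | exact hrq.symm
              | exact hra | exact hra.symm) (by rw [cycleGraph_adj]; decide)
          | exact iff_of_false (by first
              | exact nab | exact fun hh => nab hh.symm
              | exact naq | exact fun hh => naq hh.symm
              | exact hxx | exact fun hh => hxx hh.symm
              | exact hrp | exact fun hh => hrp hh.symm
              | exact nrb | exact fun hh => nrb hh.symm) (by rw [cycleGraph_adj]; decide)
          | exact iff_of_false (G.loopless.irrefl _) (by rw [cycleGraph_adj]; decide)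
  · by_cases hrc : G.Adj (x (i-1)) (v (i+1+1))
    · by_cases hrp : G.Adj (x (i-1)) (x i)
      · -- C5 on p b q c r
        refine ((hhole 5 (by norm_num)).false)
          ⟨⟨![x i, v (i+1), x (i+1), v (i+1+1), x (i-1)], ?_⟩, ?_⟩
        · intro u u'
          fin_cases u <;> fin_cases u' <;> intro h <;>
            first
            | rfl
            | exact absurd h epb | exact absurd h.symm epb
            | exact absurd h epq | exact absurd h.symm epq
            | exact absurd h epc | exact absurd h.symm epc
            | exact absurd h epr | exact absurd h.symm epr
            | exact absurd h ebq | exact absurd h.symm ebq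
            | exact absurd h ebc | exact absurd h.symm ebc
            | exact absurd h erb | exact absurd h.symm erb
            | exact absurd h eqc | exact absurd h.symm eqc
            | exact absurd h eqr | exact absurd h.symm eqr
            | exact absurd h erc | exact absurd h.symm erc
        · intro u u'
          change G.Adj (Matrix.vecCons _ _ u) (Matrix.vecCons _ _ u') ↔ _
          fin_cases u <;> fin_cases u' <;>
            first
            | exact iff_of_true (by first
                | exact hpb | exact hpb.symm | exact hbq | exact hbq.symm
                | exact hqc | exact hqc.symm | exact hrc | exact hrc.symm
                | exact hrp | exact hrp.symm) (by rw [cycleGraph_adj]; decide)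
            | exact iff_of_false (by first
                | exact hxx | exact fun hh => hxx hh.symm
                | exact npc | exact fun hh => npc hh.symm
                | exact nbc | exact fun hh => nbc hh.symm
                | exact nrb | exact fun hh => nrb hh.symm
                | exact hrq | exact fun hh => hrq hh.symm) (by rw [cycleGraph_adj]; decide)
            | exact iff_of_false (G.loopless.irrefl _) (by rw [cycleGraph_adj]; decide)
      · -- C6 on a p b q c r
        refine ((hhole 6 (by norm_num)).false)
          ⟨⟨![v i, x i, v (i+1), x (i+1), v (i+1+1), x (i-1)], ?_⟩, ?_⟩
        · intro u u'
          fin_cases u <;> fin_cases u' <;> intro h <;>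
            first
            | rfl
            | exact absurd h eap | exact absurd h.symm eap
            | exact absurd h eab | exact absurd h.symm eab
            | exact absurd h eaq | exact absurd h.symm eaq
            | exact absurd h eac | exact absurd h.symm eac
            | exact absurd h era | exact absurd h.symm era
            | exact absurd h epb | exact absurd h.symm epb
            | exact absurd h epq | exact absurd h.symm epq
            | exact absurd h epc | exact absurd h.symm epc
            | exact absurd h epr | exact absurd h.symm epr
            | exact absurd h ebq | exact absurd h.symm ebq
            | exact absurd h ebc | exact absurd h.symm ebc
            | exact absurd h erb | exact absurd h.symm erb
            | exact absurd h eqc | exact absurd h.symm eqc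
            | exact absurd h eqr | exact absurd h.symm eqr
            | exact absurd h erc | exact absurd h.symm erc
        · intro u u'
          change G.Adj (Matrix.vecCons _ _ u) (Matrix.vecCons _ _ u') ↔ _
          fin_cases u <;> fin_cases u' <;>
            first
            | exact iff_of_true (by first
                | exact hap | exact hap.symm | exact hpb | exact hpb.symm
                | exact hbq | exact hbq.symm | exact hqc | exact hqc.symm
                | exact hrc | exact hrc.symm | exact hra | exact hra.symm) (by rw [cycleGraph_adj]; decide)
            | exact iff_of_false (by first
                | exact nab | exact fun hh => nab hh.symm
                | exact naq | exact fun hh => naq hh.symm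
                | exact nac | exact fun hh => nac hh.symm
                | exact hxx | exact fun hh => hxx hh.symm
                | exact npc | exact fun hh => npc hh.symm
                | exact hrp | exact fun hh => hrp hh.symm
                | exact nbc | exact fun hh => nbc hh.symm
                | exact nrb | exact fun hh => nrb hh.symm
                | exact hrq | exact fun hh => hrq hh.symm) (by rw [cycleGraph_adj]; decide)
            | exact iff_of_false (G.loopless.irrefl _) (by rw [cycleGraph_adj]; decide)
    · by_cases hrp : G.Adj (x (i-1)) (x i)
      · -- P6 on d r p b q c
        refine h6.false
          ⟨⟨![v (i-1), x (i-1), x i, v (i+1), x (i+1), v (i+1+1)], ?_⟩, ?_⟩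
        · intro u u'
          fin_cases u <;> fin_cases u' <;> intro h <;>
            first
            | rfl
            | exact absurd h erd | exact absurd h.symm erd
            | exact absurd h epd | exact absurd h.symm epd
            | exact absurd h ebd | exact absurd h.symm ebd
            | exact absurd h eqd | exact absurd h.symm eqd
            | exact absurd h ecd | exact absurd h.symm ecd
            | exact absurd h epr | exact absurd h.symm epr
            | exact absurd h erb | exact absurd h.symm erb
            | exact absurd h eqr | exact absurd h.symm eqr
            | exact absurd h erc | exact absurd h.symm erc
            | exact absurd h epb | exact absurd h.symm epb
            | exact absurd h epq | exact absurd h.symm epq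
            | exact absurd h epc | exact absurd h.symm epc
            | exact absurd h ebq | exact absurd h.symm ebq
            | exact absurd h ebc | exact absurd h.symm ebc
            | exact absurd h eqc | exact absurd h.symm eqc
        · intro u u'
          change G.Adj (Matrix.vecCons _ _ u) (Matrix.vecCons _ _ u') ↔ _
          fin_cases u <;> fin_cases u' <;>
            first
            | exact iff_of_true (by first
                | exact hdr | exact hdr.symm | exact hrp | exact hrp.symm
                | exact hpb | exact hpb.symm | exact hbq | exact hbq.symm
                | exact hqc | exact hqc.symm) (by rw [pathGraph_adj]; decide)
            | exact iff_of_false (by first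
                | exact ndp | exact fun hh => ndp hh.symm
                | exact nbd | exact fun hh => nbd hh.symm
                | exact ndq | exact fun hh => ndq hh.symm
                | exact ncd | exact fun hh => ncd hh.symm
                | exact nrb | exact fun hh => nrb hh.symm
                | exact hrq | exact fun hh => hrq hh.symm
                | exact hrc | exact fun hh => hrc hh.symm
                | exact hxx | exact fun hh => hxx hh.symm
                | exact npc | exact fun hh => npc hh.symm
                | exact nbc | exact fun hh => nbc hh.symm) (by rw [pathGraph_adj]; decide)
            | exact iff_of_false (G.loopless.irrefl _) (by rw [pathGraph_adj]; decide)
      · -- P6 on r a p b q c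
        refine h6.false
          ⟨⟨![x (i-1), v i, x i, v (i+1), x (i+1), v (i+1+1)], ?_⟩, ?_⟩
        · intro u u'
          fin_cases u <;> fin_cases u' <;> intro h <;>
            first
            | rfl
            | exact absurd h era | exact absurd h.symm era
            | exact absurd h epr | exact absurd h.symm epr
            | exact absurd h erb | exact absurd h.symm erb
            | exact absurd h eqr | exact absurd h.symm eqr
            | exact absurd h erc | exact absurd h.symm erc
            | exact absurd h eap | exact absurd h.symm eap
            | exact absurd h eab | exact absurd h.symm eab
            | exact absurd h eaq | exact absurd h.symm eaq
            | exact absurd h eac | exact absurd h.symm eac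
            | exact absurd h epb | exact absurd h.symm epb
            | exact absurd h epq | exact absurd h.symm epq
            | exact absurd h epc | exact absurd h.symm epc
            | exact absurd h ebq | exact absurd h.symm ebq
            | exact absurd h ebc | exact absurd h.symm ebc
            | exact absurd h eqc | exact absurd h.symm eqc
        · intro u u'
          change G.Adj (Matrix.vecCons _ _ u) (Matrix.vecCons _ _ u') ↔ _
          fin_cases u <;> fin_cases u' <;>
            first
            | exact iff_of_true (by first
                | exact hra | exact hra.symm | exact hap | exact hap.symm
                | exact hpb | exact hpb.symm | exact hbq | exact hbq.symm
                | exact hqc | exact hqc.symm) (by rw [pathGraph_adj]; decide)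
            | exact iff_of_false (by first
                | exact hrp | exact fun hh => hrp hh.symm
                | exact nrb | exact fun hh => nrb hh.symm
                | exact hrq | exact fun hh => hrq hh.symm
                | exact hrc | exact fun hh => hrc hh.symm
                | exact nab | exact fun hh => nab hh.symm
                | exact naq | exact fun hh => naq hh.symm
                | exact nac | exact fun hh => nac hh.symm
                | exact hxx | exact fun hh => hxx hh.symm
                | exact npc | exact fun hh => npc hh.symm
                | exact nbc | exact fun hh => nbc hh.symm) (by rw [pathGraph_adj]; decide)
            | exact iff_of_false (G.loopless.irrefl _) (by rw [pathGraph_adj]; decide)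
end

section
/- In the same (P₆, HHD)-free C_k setup: if d_i is not adjacent to x_i, then d_i is not adjacent to x_{i+1}; symmetrically, if d_i is not adjacent to x_{i-1} then d_i is not adjacent to x_{i-2}. -/
open SimpleGraph Finset

variable {V : Type*}

set_option linter.unreachableTactic false in
lemma house_adj_iff' (p q : Fin 5) :
    house.Adj p q ↔ (p ≠ q ∧ ¬(p.val + 1 = q.val ∨ q.val + 1 = p.val)) := by
  rw [show house = (pathGraph 5)ᶜ from rfl, compl_adj, pathGraph_adj]

set_option linter.unreachableTactic false in
set_option maxHeartbeats 1600000 in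
set_option maxRecDepth 8000 in
set_option linter.unusedTactic false in
lemma house_aux {G : SimpleGraph V} (hH : _root_.Free G house) {a b c d e : V}
    (hac : G.Adj a c) (had : G.Adj a d) (hae : G.Adj a e)
    (hbd : G.Adj b d) (hbe : G.Adj b e) (hce : G.Adj c e)
    (nab : ¬ G.Adj a b) (nbc : ¬ G.Adj b c) (ncd : ¬ G.Adj c d) (nde : ¬ G.Adj d e)
    (hab : a ≠ b) (hbc : b ≠ c) (hcd : c ≠ d) (hde : d ≠ e) : False := by
  have hac' : a ≠ c := G.ne_of_adj hac
  have had' : a ≠ d := G.ne_of_adj had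
  have hae' : a ≠ e := G.ne_of_adj hae
  have hbd' : b ≠ d := G.ne_of_adj hbd
  have hbe' : b ≠ e := G.ne_of_adj hbe
  have hce' : c ≠ e := G.ne_of_adj hce
  apply hH.false
  refine ⟨⟨![a,b,c,d,e], ?_⟩, ?_⟩
  · intro p q hpq
    fin_cases p <;> fin_cases q <;> simp_all <;>
      first
        | exact hab hpq | exact hab hpq.symm
        | exact hbc hpq | exact hbc hpq.symm
        | exact hcd hpq | exact hcd hpq.symm
        | exact hde hpq | exact hde hpq.symm
        | exact hac' hpq | exact hac' hpq.symm
        | exact had' hpq | exact had' hpq.symm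
        | exact hae' hpq | exact hae' hpq.symm
        | exact hbd' hpq | exact hbd' hpq.symm
        | exact hbe' hpq | exact hbe' hpq.symm
        | exact hce' hpq | exact hce' hpq.symm
  · intro p q
    fin_cases p <;> fin_cases q <;>
      rw [house_adj_iff'] <;> simp [Fin.ext_iff] <;>
      first
        | exact G.loopless.irrefl _
        | exact hac | exact hac.symm | exact had | exact had.symm
        | exact hae | exact hae.symm | exact hbd | exact hbd.symm
        | exact hbe | exact hbe.symm | exact hce | exact hce.symm
        | exact nab | exact fun h => nab h.symm
        | exact nbc | exact fun h => nbc h.symm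
        | exact ncd | exact fun h => ncd h.symm
        | exact nde | exact fun h => nde h.symm
        | exact iff_of_false (G.loopless.irrefl _) (by decide)
        | exact iff_of_true hac (by decide) | exact iff_of_true hac.symm (by decide)
        | exact iff_of_true had (by decide) | exact iff_of_true had.symm (by decide)
        | exact iff_of_true hae (by decide) | exact iff_of_true hae.symm (by decide)
        | exact iff_of_true hbd (by decide) | exact iff_of_true hbd.symm (by decide)
        | exact iff_of_true hbe (by decide) | exact iff_of_true hbe.symm (by decide)
        | exact iff_of_true hce (by decide) | exact iff_of_true hce.symm (by decide)
        | exact iff_of_false nab (by decide) | exact iff_of_false (fun h => nab h.symm) (by decide)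
        | exact iff_of_false nbc (by decide) | exact iff_of_false (fun h => nbc h.symm) (by decide)
        | exact iff_of_false ncd (by decide) | exact iff_of_false (fun h => ncd h.symm) (by decide)
        | exact iff_of_false nde (by decide) | exact iff_of_false (fun h => nde h.symm) (by decide)

set_option linter.unreachableTactic false in
set_option maxHeartbeats 1600000 in
set_option maxRecDepth 8000 in
set_option linter.unusedTactic false in
/-- If `G` contains an induced path `a-b-c-d-e-f`, contradiction with `P₆`-freeness. -/
lemma p6_aux {G : SimpleGraph V} (h6 : _root_.Free G (pathGraph 6)) {a b c d e f : V}
    (eab : G.Adj a b) (ebc : G.Adj b c) (ecd : G.Adj c d) (ede : G.Adj d e) (eef : G.Adj e f)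
    (nac : ¬ G.Adj a c) (nad : ¬ G.Adj a d) (nae : ¬ G.Adj a e) (naf : ¬ G.Adj a f)
    (nbd : ¬ G.Adj b d) (nbe : ¬ G.Adj b e) (nbf : ¬ G.Adj b f)
    (nce : ¬ G.Adj c e) (ncf : ¬ G.Adj c f) (ndf : ¬ G.Adj d f)
    (hac : a ≠ c) (had : a ≠ d) (hae : a ≠ e) (haf : a ≠ f)
    (hbd : b ≠ d) (hbe : b ≠ e) (hbf : b ≠ f)
    (hce : c ≠ e) (hcf : c ≠ f) (hdf : d ≠ f) : False := by
  have hab : a ≠ b := G.ne_of_adj eab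
  have hbc : b ≠ c := G.ne_of_adj ebc
  have hcd : c ≠ d := G.ne_of_adj ecd
  have hde : d ≠ e := G.ne_of_adj ede
  have hef : e ≠ f := G.ne_of_adj eef
  apply h6.false
  refine ⟨⟨![a,b,c,d,e,f], ?_⟩, ?_⟩
  · intro p q hpq
    fin_cases p <;> fin_cases q <;>
      first
        | rfl
        | (simp at hpq
           first
            | exact absurd hpq hab | exact absurd hpq hab.symm
            | exact absurd hpq hbc | exact absurd hpq hbc.symm
            | exact absurd hpq hcd | exact absurd hpq hcd.symm
            | exact absurd hpq hde | exact absurd hpq hde.symm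
            | exact absurd hpq hef | exact absurd hpq hef.symm
            | exact absurd hpq hac | exact absurd hpq hac.symm
            | exact absurd hpq had | exact absurd hpq had.symm
            | exact absurd hpq hae | exact absurd hpq hae.symm
            | exact absurd hpq haf | exact absurd hpq haf.symm
            | exact absurd hpq hbd | exact absurd hpq hbd.symm
            | exact absurd hpq hbe | exact absurd hpq hbe.symm
            | exact absurd hpq hbf | exact absurd hpq hbf.symm
            | exact absurd hpq hce | exact absurd hpq hce.symm
            | exact absurd hpq hcf | exact absurd hpq hcf.symm
            | exact absurd hpq hdf | exact absurd hpq hdf.symm)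
  · intro p q
    fin_cases p <;> fin_cases q <;>
      rw [pathGraph_adj] <;> simp [Fin.ext_iff] <;>
      first
        | exact G.loopless.irrefl _
        | exact eab | exact eab.symm | exact ebc | exact ebc.symm
        | exact ecd | exact ecd.symm | exact ede | exact ede.symm
        | exact eef | exact eef.symm
        | exact nac | exact fun h => nac h.symm
        | exact nad | exact fun h => nad h.symm
        | exact nae | exact fun h => nae h.symm
        | exact naf | exact fun h => naf h.symm
        | exact nbd | exact fun h => nbd h.symm
        | exact nbe | exact fun h => nbe h.symm
        | exact nbf | exact fun h => nbf h.symm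
        | exact nce | exact fun h => nce h.symm
        | exact ncf | exact fun h => ncf h.symm
        | exact ndf | exact fun h => ndf h.symm
        | exact iff_of_false (G.loopless.irrefl _) (by decide)
        | exact iff_of_true eab (by decide) | exact iff_of_true eab.symm (by decide)
        | exact iff_of_true ebc (by decide) | exact iff_of_true ebc.symm (by decide)
        | exact iff_of_true ecd (by decide) | exact iff_of_true ecd.symm (by decide)
        | exact iff_of_true ede (by decide) | exact iff_of_true ede.symm (by decide)
        | exact iff_of_true eef (by decide) | exact iff_of_true eef.symm (by decide)
        | exact iff_of_false nac (by decide) | exact iff_of_false (fun h => nac h.symm) (by decide)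
        | exact iff_of_false nad (by decide) | exact iff_of_false (fun h => nad h.symm) (by decide)
        | exact iff_of_false nae (by decide) | exact iff_of_false (fun h => nae h.symm) (by decide)
        | exact iff_of_false naf (by decide) | exact iff_of_false (fun h => naf h.symm) (by decide)
        | exact iff_of_false nbd (by decide) | exact iff_of_false (fun h => nbd h.symm) (by decide)
        | exact iff_of_false nbe (by decide) | exact iff_of_false (fun h => nbe h.symm) (by decide)
        | exact iff_of_false nbf (by decide) | exact iff_of_false (fun h => nbf h.symm) (by decide)
        | exact iff_of_false nce (by decide) | exact iff_of_false (fun h => nce h.symm) (by decide)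
        | exact iff_of_false ncf (by decide) | exact iff_of_false (fun h => ncf h.symm) (by decide)
        | exact iff_of_false ndf (by decide) | exact iff_of_false (fun h => ndf h.symm) (by decide)

/-- Core lemma: one direction of `stmt7`, proved for an arbitrary index. -/
lemma stmt7_core (G : SimpleGraph V) (h6 : _root_.Free G (pathGraph 6)) (hH : _root_.Free G house)
    (D : Set V) (hED : IsEDS G D)
    (k : ℕ) (hk : 4 ≤ k) (v : ZMod k → V) (hinj : Function.Injective v)
    (hnon : ∀ i j : ZMod k, j ≠ i - 1 → j ≠ i → j ≠ i + 1 → ¬ (square G).Adj (v i) (v j))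
    (x : ZMod k → V) (hd2 : ∀ i : ZMod k, G.dist (v i) (v (i + 1)) = 2)
    (hx : ∀ i : ZMod k, G.Adj (v i) (x i) ∧ G.Adj (x i) (v (i + 1)))
    (hxadj : ∀ i : ZMod k, G.Adj (x i) (x (i + 1)))
    (d : ZMod k → V) (hdD : ∀ i : ZMod k, d i ∈ D)
    (hdv : ∀ i : ZMod k, G.Adj (d i) (v i))
    (hout : ∀ i j : ZMod k, d i ≠ v j ∧ d i ≠ x j)
    (i : ZMod k) (hA : ¬ G.Adj (d i) (x i)) : ¬ G.Adj (d i) (x (i + 1)) := by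
  intro hB
  -- basic `ZMod k` facts
  have hk1 : (1 : ZMod k) ≠ 0 := by
    intro h
    have h2 : ((1 : ℕ) : ZMod k) = 0 := by exact_mod_cast h
    have h3 := (ZMod.natCast_eq_zero_iff 1 k).mp h2
    have := Nat.le_of_dvd (by norm_num) h3
    omega
  have hk2 : (2 : ZMod k) ≠ 0 := by
    intro h
    have h2 : ((2 : ℕ) : ZMod k) = 0 := by exact_mod_cast h
    have h3 := (ZMod.natCast_eq_zero_iff 2 k).mp h2
    have := Nat.le_of_dvd (by norm_num) h3
    omega
  have hk3 : (3 : ZMod k) ≠ 0 := by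
    intro h
    have h2 : ((3 : ℕ) : ZMod k) = 0 := by exact_mod_cast h
    have h3 := (ZMod.natCast_eq_zero_iff 3 k).mp h2
    have := Nat.le_of_dvd (by norm_num) h3
    omega
  -- distinct cycle vertices are nonadjacent in `G`
  have hvv : ∀ a b : ZMod k, a ≠ b → ¬ G.Adj (v a) (v b) := by
    intro a b hab hadj
    by_cases h1 : b = a + 1
    · subst h1
      have hdist := SimpleGraph.dist_eq_one_iff_adj.mpr hadj
      have := hd2 a
      omega
    · by_cases h2 : a = b + 1
      · subst h2
        have hdist := SimpleGraph.dist_eq_one_iff_adj.mpr hadj.symm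
        have := hd2 b
        omega
      · refine hnon a b (fun h => h2 (by linear_combination -h)) (fun h => hab h.symm) h1
          ⟨G.ne_of_adj hadj, Or.inl hadj⟩
  -- no common neighbors for vertices far on the cycle
  have hcom : ∀ (a b : ZMod k) (w : V), b ≠ a - 1 → b ≠ a → b ≠ a + 1 →
      G.Adj (v a) w → G.Adj w (v b) → False := by
    intro a b w n1 n2 n3 h1 h2
    exact hnon a b n1 n2 n3 ⟨fun h => n2 (hinj h).symm, Or.inr ⟨w, h1, h2⟩⟩
  -- `x a` is adjacent only to `v a` and `v (a+1)` among cycle vertices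
  have hxv : ∀ a c : ZMod k, G.Adj (x a) (v c) → c = a ∨ c = a + 1 := by
    intro a c h
    by_contra hcon
    push_neg at hcon
    obtain ⟨hc1, hc2⟩ := hcon
    by_cases h3 : c = a - 1
    · subst h3
      exact hcom (a - 1) (a + 1) (x a) (fun hh => hk3 (by linear_combination hh))
        (fun hh => hk2 (by linear_combination hh)) (fun hh => hk1 (by linear_combination hh))
        h.symm (hx a).2
    · exact hcom c a (x a) (fun hh => hc2 (by linear_combination -hh))
        (fun hh => hc1 hh.symm) (fun hh => h3 (by linear_combination -hh))
        h.symm (hx a).1.symm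
  have hxvn : ∀ a c : ZMod k, c ≠ a → c ≠ a + 1 → ¬ G.Adj (v c) (x a) := by
    intro a c n1 n2 h
    rcases hxv a c h.symm with h' | h'
    · exact n1 h'
    · exact n2 h'
  have nxv : ∀ a c : ZMod k, c ≠ a → c ≠ a + 1 → ¬ G.Adj (x a) (v c) :=
    fun a c n1 n2 h => hxvn a c n1 n2 h.symm
  -- cycle vertices and midpoints are distinct
  have hvx : ∀ a b : ZMod k, v a ≠ x b := by
    intro a b h
    have h2 := (hx b).1
    rw [← h] at h2
    by_cases hab : b = a
    · rw [hab] at h2; exact G.loopless.irrefl _ h2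
    · exact hvv b a hab h2
  -- uniqueness of dominators
  have domuniq : ∀ (u w₁ w₂ : V), w₁ ∈ D → w₂ ∈ D → (w₁ = u ∨ G.Adj w₁ u) →
      (w₂ = u ∨ G.Adj w₂ u) → w₁ = w₂ := by
    intro u w₁ w₂ m1 m2 h3 h4
    obtain ⟨c, -, hu⟩ := hED u
    rw [hu w₁ ⟨m1, h3⟩, hu w₂ ⟨m2, h4⟩]
  -- convenient rewritten adjacencies at `i-1`
  have hxm : G.Adj (x (i - 1)) (v i) := by
    have h := (hx (i - 1)).2
    rwa [show i - 1 + 1 = i from by ring] at h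
  have hxm2 : G.Adj (x (i - 1)) (x i) := by
    have h := hxadj (i - 1)
    rwa [show i - 1 + 1 = i from by ring] at h
  have hx2 : G.Adj (x (i + 1)) (v (i + 2)) := by
    have h := (hx (i + 1)).2
    rwa [show i + 1 + 1 = i + 2 from by ring] at h
  -- Step 1: `d i` is adjacent to `v (i+1)`
  have S1 : G.Adj (d i) (v (i + 1)) := by
    by_contra hS1
    exact house_aux hH (hx i).2 (hx i).1.symm (hxadj i) (hdv i) hB (hx (i + 1)).1
      (fun h => hA h.symm) hS1 (hvv (i + 1) i (fun h => hk1 (by linear_combination h)))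
      (hxvn (i + 1) i (fun h => hk1 (by linear_combination -h))
        (fun h => hk2 (by linear_combination -h)))
      (hout i i).2.symm (hout i (i + 1)).1
      (fun h => hk1 (by linear_combination hinj h)) (hvx i (i + 1))
  -- Step 2: `d i` is adjacent to `x (i-1)`
  have S2 : G.Adj (d i) (x (i - 1)) := by
    by_contra hS2
    exact house_aux hH hxm.symm (hdv i).symm (hx i).1 S1.symm (hx i).2.symm hxm2
      (hvv i (i + 1) (fun h => hk1 (by linear_combination -h)))
      (hxvn (i - 1) (i + 1) (fun h => hk2 (by linear_combination h))
        (fun h => hk1 (by linear_combination h)))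
      (fun h => hS2 h.symm) hA
      (fun h => hk1 (by linear_combination -(hinj h))) (hvx (i + 1) (i - 1))
      (hout i (i - 1)).2.symm (hout i i).2
  -- the dominator of `v (i+2)`
  have d1 : d (i + 2) ≠ d i := by
    intro h
    have h2 := hdv (i + 2)
    rw [h] at h2
    exact hcom i (i + 2) (d i) (fun hh => hk3 (by linear_combination hh))
      (fun hh => hk2 (by linear_combination hh)) (fun hh => hk1 (by linear_combination hh))
      (hdv i).symm h2
  have d2 : ¬ G.Adj (d (i + 2)) (x (i + 1)) := fun h =>
    d1 (domuniq (x (i + 1)) _ _ (hdD _) (hdD _) (Or.inr h) (Or.inr hB))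
  have d3 : ¬ G.Adj (d (i + 2)) (x (i - 1)) := fun h =>
    d1 (domuniq (x (i - 1)) _ _ (hdD _) (hdD _) (Or.inr h) (Or.inr S2))
  have d4 : ¬ G.Adj (d (i + 2)) (v (i + 1)) := fun h =>
    d1 (domuniq (v (i + 1)) _ _ (hdD _) (hdD _) (Or.inr h) (Or.inr S1))
  have d4' : ¬ G.Adj (d (i + 2)) (v i) := fun h =>
    d1 (domuniq (v i) _ _ (hdD _) (hdD _) (Or.inr h) (Or.inr (hdv i)))
  have d6 : ¬ G.Adj (d (i + 2)) (x i) := by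
    intro h
    exact house_aux hH (hx i).2 h.symm (hxadj i) (hdv (i + 2)).symm hx2.symm
      (hx (i + 1)).1
      (nxv i (i + 2) (fun hh => hk2 (by linear_combination hh))
        (fun hh => hk1 (by linear_combination hh)))
      (hvv (i + 2) (i + 1) (fun hh => hk1 (by linear_combination hh)))
      (fun hh => d4 hh.symm) d2
      (hvx (i + 2) i).symm (fun hh => hk1 (by linear_combination hinj hh))
      (hout (i + 2) (i + 1)).1.symm (hout (i + 2) (i + 1)).2
  by_cases hPv : G.Adj (d (i + 2)) (v (i - 1))
  · -- induced `P₆`: v i - x i - x (i+1) - v (i+2) - d (i+2) - v (i-1)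
    exact p6_aux h6 (hx i).1 (hxadj i) hx2 (hdv (i + 2)).symm hPv
      (hxvn (i + 1) i (fun h => hk1 (by linear_combination -h))
        (fun h => hk2 (by linear_combination -h)))
      (hvv i (i + 2) (fun h => hk2 (by linear_combination -h)))
      (fun h => d4' h.symm)
      (hvv i (i - 1) (fun h => hk1 (by linear_combination h)))
      (nxv i (i + 2) (fun h => hk2 (by linear_combination h))
        (fun h => hk1 (by linear_combination h)))
      (fun h => d6 h.symm)
      (nxv i (i - 1) (fun h => hk1 (by linear_combination -h))
        (fun h => hk2 (by linear_combination -h)))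
      (fun h => d2 h.symm)
      (nxv (i + 1) (i - 1) (fun h => hk2 (by linear_combination -h))
        (fun h => hk3 (by linear_combination -h)))
      (hvv (i + 2) (i - 1) (fun h => hk3 (by linear_combination h)))
      (hvx i (i + 1)) (fun h => hk2 (by linear_combination -(hinj h)))
      (hout (i + 2) i).1.symm (fun h => hk1 (by linear_combination hinj h))
      (hvx (i + 2) i).symm (hout (i + 2) i).2.symm (hvx (i - 1) i).symm
      (hout (i + 2) (i + 1)).2.symm (hvx (i - 1) (i + 1)).symm
      (fun h => hk3 (by linear_combination hinj h))
  · -- the dominator of `v (i-1)`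
    have q1 : d (i - 1) ≠ d i := by
      intro h
      have h2 := hdv (i - 1)
      rw [h] at h2
      exact hcom (i + 1) (i - 1) (d i) (fun hh => hk1 (by linear_combination -hh))
        (fun hh => hk2 (by linear_combination -hh)) (fun hh => hk3 (by linear_combination -hh))
        S1.symm h2
    have q2 : ¬ G.Adj (d (i - 1)) (x (i - 1)) := fun h =>
      q1 (domuniq (x (i - 1)) _ _ (hdD _) (hdD _) (Or.inr h) (Or.inr S2))
    have q3 : ¬ G.Adj (d (i - 1)) (x (i + 1)) := fun h =>
      q1 (domuniq (x (i + 1)) _ _ (hdD _) (hdD _) (Or.inr h) (Or.inr hB))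
    have q4 : ¬ G.Adj (d (i - 1)) (v i) := fun h =>
      q1 (domuniq (v i) _ _ (hdD _) (hdD _) (Or.inr h) (Or.inr (hdv i)))
    have q5 : d (i - 1) ≠ d (i + 2) := by
      intro h
      have h2 := hdv (i - 1)
      rw [h] at h2
      exact hPv h2
    have q6 : ¬ G.Adj (d (i - 1)) (d (i + 2)) := fun h =>
      q5 (domuniq (d (i + 2)) _ _ (hdD _) (hdD _) (Or.inr h) (Or.inl rfl))
    have q8 : ¬ G.Adj (d (i - 1)) (v (i + 2)) := fun h =>
      q5 (domuniq (v (i + 2)) _ _ (hdD _) (hdD _) (Or.inr h) (Or.inr (hdv (i + 2))))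
    have q7 : ¬ G.Adj (d (i - 1)) (x i) := by
      intro h
      exact house_aux hH hxm (hx (i - 1)).1.symm hxm2 (hdv (i - 1)) h (hx i).1
        (fun hh => q2 hh.symm) q4
        (hvv i (i - 1) (fun hh => hk1 (by linear_combination hh)))
        (hxvn i (i - 1) (fun hh => hk1 (by linear_combination -hh))
          (fun hh => hk2 (by linear_combination -hh)))
        (hout (i - 1) (i - 1)).2.symm (hout (i - 1) i).1
        (fun hh => hk1 (by linear_combination hinj hh)) (hvx (i - 1) i)
    by_cases hx13 : G.Adj (x (i - 1)) (x (i + 1))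
    · -- induced `P₆`: d (i+2) - v (i+2) - x (i+1) - x (i-1) - v (i-1) - d (i-1)
      exact p6_aux h6 (hdv (i + 2)) hx2.symm hx13.symm (hx (i - 1)).1.symm
        (hdv (i - 1)).symm
        d2 d3 hPv (fun h => q6 h.symm)
        (hxvn (i - 1) (i + 2) (fun h => hk3 (by linear_combination h))
          (fun h => hk2 (by linear_combination h)))
        (hvv (i + 2) (i - 1) (fun h => hk3 (by linear_combination h)))
        (fun h => q8 h.symm)
        (nxv (i + 1) (i - 1) (fun h => hk2 (by linear_combination -h))
          (fun h => hk3 (by linear_combination -h)))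
        (fun h => q3 h.symm) (fun h => q2 h.symm)
        (hout (i + 2) (i + 1)).2 (hout (i + 2) (i - 1)).2 (hout (i + 2) (i - 1)).1 q5.symm
        (hvx (i + 2) (i - 1)) (fun h => hk3 (by linear_combination hinj h))
        (hout (i - 1) (i + 2)).1.symm (hvx (i - 1) (i + 1)).symm
        (hout (i - 1) (i + 1)).2.symm (hout (i - 1) (i - 1)).2.symm
    · -- induced `P₆`: v (i+2) - x (i+1) - x i - x (i-1) - v (i-1) - d (i-1)
      have hxx : x (i - 1) ≠ x (i + 1) := by
        intro h
        have h2 := (hx (i - 1)).1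
        rw [h] at h2
        rcases hxv (i + 1) (i - 1) h2.symm with h' | h'
        · exact hk2 (by linear_combination -h')
        · exact hk3 (by linear_combination -h')
      exact p6_aux h6 hx2.symm (hxadj i).symm hxm2.symm (hx (i - 1)).1.symm
        (hdv (i - 1)).symm
        (hxvn i (i + 2) (fun h => hk2 (by linear_combination h))
          (fun h => hk1 (by linear_combination h)))
        (hxvn (i - 1) (i + 2) (fun h => hk3 (by linear_combination h))
          (fun h => hk2 (by linear_combination h)))
        (hvv (i + 2) (i - 1) (fun h => hk3 (by linear_combination h)))
        (fun h => q8 h.symm)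
        (fun h => hx13 h.symm)
        (nxv (i + 1) (i - 1) (fun h => hk2 (by linear_combination -h))
          (fun h => hk3 (by linear_combination -h)))
        (fun h => q3 h.symm)
        (nxv i (i - 1) (fun h => hk1 (by linear_combination -h))
          (fun h => hk2 (by linear_combination -h)))
        (fun h => q7 h.symm) (fun h => q2 h.symm)
        (hvx (i + 2) i) (hvx (i + 2) (i - 1))
        (fun h => hk3 (by linear_combination hinj h))
        (hout (i - 1) (i + 2)).1.symm
        hxx.symm (hvx (i - 1) (i + 1)).symm (hout (i - 1) (i + 1)).2.symm
        (hvx (i - 1) i).symm (hout (i - 1) i).2.symm (hout (i - 1) (i - 1)).2.symm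

theorem stmt7 (G : SimpleGraph V) (h6 : _root_.Free G (pathGraph 6)) (hH : _root_.Free G house)
    (hhole : HoleFree G) (hdom : _root_.Free G domino)
    (D : Set V) (hED : IsEDS G D)
    (k : ℕ) (hk : 4 ≤ k) (v : ZMod k → V) (hinj : Function.Injective v)
    (hadj : ∀ i : ZMod k, (square G).Adj (v i) (v (i + 1)))
    (hnon : ∀ i j : ZMod k, j ≠ i - 1 → j ≠ i → j ≠ i + 1 → ¬ (square G).Adj (v i) (v j))
    (x : ZMod k → V) (hd2 : ∀ i : ZMod k, G.dist (v i) (v (i + 1)) = 2)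
    (hx : ∀ i : ZMod k, G.Adj (v i) (x i) ∧ G.Adj (x i) (v (i + 1)))
    (hxadj : ∀ i : ZMod k, G.Adj (x i) (x (i + 1)))
    (hDout : ∀ i : ZMod k, v i ∉ D ∧ x i ∉ D)
    (d : ZMod k → V) (hdD : ∀ i : ZMod k, d i ∈ D)
    (hdv : ∀ i : ZMod k, G.Adj (d i) (v i))
    (hout : ∀ i j : ZMod k, d i ≠ v j ∧ d i ≠ x j) :
    ∀ i : ZMod k,
      (¬ G.Adj (d i) (x i) → ¬ G.Adj (d i) (x (i + 1))) ∧
      (¬ G.Adj (d i) (x (i - 1)) → ¬ G.Adj (d i) (x (i - 2))) := by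
  intro i
  constructor
  · exact stmt7_core G h6 hH D hED k hk v hinj hnon x hd2 hx hxadj d hdD hdv hout i
  · intro h1
    have core := stmt7_core G h6 hH D hED k hk (fun j => v (i - j))
      (fun a b hab => by
        have := hinj hab
        simpa [sub_right_inj] using this)
      (fun a b n1 n2 n3 => hnon (i - a) (i - b)
        (fun h => n3 (by linear_combination -h))
        (fun h => n2 (by linear_combination -h))
        (fun h => n1 (by linear_combination -h)))
      (fun j => x (i - 1 - j))
      (fun j => by
        have h := hd2 (i - j - 1)
        rw [show i - j - 1 + 1 = i - j from by ring] at h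
        show G.dist (v (i - j)) (v (i - (j + 1))) = 2
        rw [show i - (j + 1) = i - j - 1 from by ring, SimpleGraph.dist_comm]
        exact h)
      (fun j => by
        constructor
        · have h := (hx (i - 1 - j)).2
          rw [show i - 1 - j + 1 = i - j from by ring] at h
          exact h.symm
        · have h := (hx (i - 1 - j)).1.symm
          show G.Adj (x (i - 1 - j)) (v (i - (j + 1)))
          rwa [show i - (j + 1) = i - 1 - j from by ring])
      (fun j => by
        have h := hxadj (i - 1 - (j + 1))
        rw [show i - 1 - (j + 1) + 1 = i - 1 - j from by ring] at h
        show G.Adj (x (i - 1 - j)) (x (i - 1 - (j + 1)))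
        exact h.symm)
      (fun j => d (i - j)) (fun j => hdD (i - j)) (fun j => hdv (i - j))
      (fun a b => ⟨(hout (i - a) (i - b)).1, (hout (i - a) (i - 1 - b)).2⟩)
      0 (by simpa using h1)
    have core' : ¬ G.Adj (d (i - 0)) (x (i - 1 - (0 + 1))) := core
    rw [show i - (0 : ZMod k) = i from by ring,
      show i - 1 - ((0 : ZMod k) + 1) = i - 2 from by ring] at core'
    exact core'
end

section
/- In the same (P₆, HHD)-free C_k setup: if d_i is not adjacent to x_i, then d_{i+2} is adjacent to x_{i+1} and d_{i+2} is not adjacent to x_{i+2} (indices mod k). -/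
open SimpleGraph Finset

variable {V : Type*}

private def vmap6 (a b c d e f : V) : Fin 6 → V
  | 0 => a | 1 => b | 2 => c | 3 => d | 4 => e | 5 => f

private def vmap5 (a b c d e : V) : Fin 5 → V
  | 0 => a | 1 => b | 2 => c | 3 => d | 4 => e

lemma no_p6 {G : SimpleGraph V} (h6 : _root_.Free G (pathGraph 6)) (a b c d e f : V)
    (hab : G.Adj a b) (hbc : G.Adj b c) (hcd : G.Adj c d) (hde : G.Adj d e) (hef : G.Adj e f)
    (hac : ¬G.Adj a c) (had : ¬G.Adj a d) (hae : ¬G.Adj a e) (haf : ¬G.Adj a f)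
    (hbd : ¬G.Adj b d) (hbe : ¬G.Adj b e) (hbf : ¬G.Adj b f)
    (hce : ¬G.Adj c e) (hcf : ¬G.Adj c f) (hdf : ¬G.Adj d f)
    (nac : a ≠ c) (nad : a ≠ d) (nae : a ≠ e) (naf : a ≠ f)
    (nbd : b ≠ d) (nbe : b ≠ e) (nbf : b ≠ f) (nce : c ≠ e) (ncf : c ≠ f) (ndf : d ≠ f) :
    False := by
  have nab := hab.ne; have nbc := hbc.ne; have ncd := hcd.ne
  have nde := hde.ne; have nef := hef.ne
  have hca : ¬G.Adj c a := fun h => hac h.symm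
  have hda : ¬G.Adj d a := fun h => had h.symm
  have hea : ¬G.Adj e a := fun h => hae h.symm
  have hfa : ¬G.Adj f a := fun h => haf h.symm
  have hdb : ¬G.Adj d b := fun h => hbd h.symm
  have heb : ¬G.Adj e b := fun h => hbe h.symm
  have hfb : ¬G.Adj f b := fun h => hbf h.symm
  have hec : ¬G.Adj e c := fun h => hce h.symm
  have hfc : ¬G.Adj f c := fun h => hcf h.symm
  have hfd : ¬G.Adj f d := fun h => hdf h.symm
  apply h6.false
  refine ⟨⟨vmap6 a b c d e f, ?_⟩, ?_⟩
  · intro u w h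
    fin_cases u <;> fin_cases w <;> simp only [vmap6] at h <;>
      first | rfl | exact absurd h ‹_› | exact absurd h (Ne.symm ‹_›)
  · intro u w
    show G.Adj (vmap6 a b c d e f u) (vmap6 a b c d e f w) ↔ _
    fin_cases u <;> fin_cases w <;>
      simp [vmap6, Function.Embedding.coeFn_mk, pathGraph_adj, hab, hbc, hcd, hde, hef, hab.symm, hbc.symm, hcd.symm,
        hde.symm, hef.symm, hac, had, hae, haf, hbd, hbe, hbf, hce, hcf, hdf,
        hca, hda, hea, hfa, hdb, heb, hfb, hec, hfc, hfd, G.loopless] <;> decide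

lemma no_house {G : SimpleGraph V} (hH : _root_.Free G house) (p q r s t : V)
    (hpq : G.Adj p q) (hqr : G.Adj q r) (hrs : G.Adj r s) (hsp : G.Adj s p)
    (htq : G.Adj t q) (htr : G.Adj t r)
    (hpr : ¬G.Adj p r) (hqs : ¬G.Adj q s) (htp : ¬G.Adj t p) (hts : ¬G.Adj t s)
    (npr : p ≠ r) (nqs : q ≠ s) (ntp : t ≠ p) (nts : t ≠ s) : False := by
  have npq := hpq.ne; have nqr := hqr.ne; have nrs := hrs.ne
  have nsp := hsp.ne; have ntq := htq.ne; have ntr := htr.ne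
  have hrp : ¬G.Adj r p := fun h => hpr h.symm
  have hsq : ¬G.Adj s q := fun h => hqs h.symm
  have hpt : ¬G.Adj p t := fun h => htp h.symm
  have hst : ¬G.Adj s t := fun h => hts h.symm
  apply hH.false
  -- 0↦q, 1↦s, 2↦t, 3↦p, 4↦r
  refine ⟨⟨vmap5 q s t p r, ?_⟩, ?_⟩
  · intro u w h
    fin_cases u <;> fin_cases w <;> simp only [vmap5] at h <;>
      first | rfl | exact absurd h ‹_› | exact absurd h (Ne.symm ‹_›)
  · intro u w
    show G.Adj (vmap5 q s t p r u) (vmap5 q s t p r w) ↔ _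
    fin_cases u <;> fin_cases w <;>
      simp [vmap5, Function.Embedding.coeFn_mk, house, compl_adj, pathGraph_adj, hpq, hqr, hrs, hsp, htq, htr,
        hpq.symm, hqr.symm, hrs.symm, hsp.symm, htq.symm, htr.symm,
        hpr, hqs, htp, hts, hrp, hsq, hpt, hst, G.loopless,
        npq, nqr, nrs, nsp, ntq, ntr, npr, nqs, ntp, nts,
        npq.symm, nqr.symm, nrs.symm, nsp.symm, ntq.symm, ntr.symm,
        npr.symm, nqs.symm, ntp.symm, nts.symm] <;> decide


theorem stmt8 (G : SimpleGraph V) (h6 : _root_.Free G (pathGraph 6)) (hH : _root_.Free G house)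
    (hhole : HoleFree G) (hdom : _root_.Free G domino)
    (D : Set V) (hED : IsEDS G D)
    (k : ℕ) (hk : 4 ≤ k) (v : ZMod k → V) (hinj : Function.Injective v)
    (hadj : ∀ i : ZMod k, (square G).Adj (v i) (v (i + 1)))
    (hnon : ∀ i j : ZMod k, j ≠ i - 1 → j ≠ i → j ≠ i + 1 → ¬ (square G).Adj (v i) (v j))
    (x : ZMod k → V) (hd2 : ∀ i : ZMod k, G.dist (v i) (v (i + 1)) = 2)
    (hx : ∀ i : ZMod k, G.Adj (v i) (x i) ∧ G.Adj (x i) (v (i + 1)))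
    (hxadj : ∀ i : ZMod k, G.Adj (x i) (x (i + 1)))
    (hDout : ∀ i : ZMod k, v i ∉ D ∧ x i ∉ D)
    (d : ZMod k → V) (hdD : ∀ i : ZMod k, d i ∈ D)
    (hdv : ∀ i : ZMod k, G.Adj (d i) (v i))
    (hout : ∀ i j : ZMod k, d i ≠ v j ∧ d i ≠ x j)
    (hdinj : Function.Injective d)
    (hone : ∀ i : ZMod k, ¬ G.Adj (d i) (x (i - 1)) ∨ ¬ G.Adj (d i) (x i)) :
    ∀ i : ZMod k, ¬ G.Adj (d i) (x i) →
      G.Adj (d (i + 2)) (x (i + 1)) ∧ ¬ G.Adj (d (i + 2)) (x (i + 2)) := by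
  intro i hni
  haveI : NeZero k := ⟨by omega⟩
  -- basic ZMod index facts
  have hcast : ∀ n : ℕ, 0 < n → n < k → (n : ZMod k) ≠ 0 := by
    intro n hn hnk h
    rw [ZMod.natCast_eq_zero_iff] at h
    have := Nat.le_of_dvd hn h
    omega
  have h1 : (1 : ZMod k) ≠ 0 := by simpa using hcast 1 (by omega) (by omega)
  have h2 : (2 : ZMod k) ≠ 0 := by
    have := hcast 2 (by omega) (by omega); simpa using this
  have h3 : (3 : ZMod k) ≠ 0 := by
    have := hcast 3 (by omega) (by omega); simpa using this
  have hne : ∀ a b : ZMod k, a - b ≠ 0 → a ≠ b := by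
    intro a b h hab; exact h (by rw [hab, sub_self])
  have n21 : i + 2 ≠ i + 1 := hne _ _ (by rw [show i + 2 - (i + 1) = 1 by ring]; exact h1)
  have n20 : i + 2 ≠ i := hne _ _ (by rw [show i + 2 - i = 2 by ring]; exact h2)
  have n2m1 : i + 2 ≠ i - 1 := hne _ _ (by rw [show i + 2 - (i - 1) = 3 by ring]; exact h3)
  have n10 : i + 1 ≠ i := hne _ _ (by rw [show i + 1 - i = 1 by ring]; exact h1)
  -- efficient domination helpers
  have uniqD : ∀ (u a b : V), a ∈ D → b ∈ D → (a = u ∨ G.Adj a u) → (b = u ∨ G.Adj b u) →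
      a = b := by
    intro u a b ha hb hau hbu
    obtain ⟨w, _, hw⟩ := hED u
    rw [hw a ⟨ha, hau⟩, hw b ⟨hb, hbu⟩]
  have domv : ∀ (j : ZMod k) (e : V), e ∈ D → G.Adj e (v j) → e = d j := by
    intro j e he h
    exact uniqD (v j) e (d j) he (hdD j) (Or.inr h) (Or.inr (hdv j))
  have nadj_vv : ∀ j : ZMod k, ¬ G.Adj (v j) (v (j + 1)) := by
    intro j h
    have := dist_eq_one_iff_adj.mpr h
    rw [hd2 j] at this
    omega
  have nadj_vv12 : ¬ G.Adj (v (i + 1)) (v (i + 2)) := by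
    have h' := nadj_vv (i + 1)
    rwa [show i + 1 + 1 = i + 2 by ring] at h'
  have hx12 : G.Adj (x (i + 1)) (v (i + 2)) := by
    have h' := (hx (i + 1)).2
    rwa [show i + 1 + 1 = i + 2 by ring] at h'
  -- square non-adjacency at distance 2 along the cycle
  have vne : v i ≠ v (i + 2) := fun h => n20 (hinj h).symm
  have nsq : ¬ (square G).Adj (v i) (v (i + 2)) := hnon i (i + 2) n2m1 n20 n21
  have sqhelp : ∀ w : V, G.Adj (v i) w → G.Adj w (v (i + 2)) → False := by
    intro w hw1 hw2
    exact nsq ⟨vne, Or.inr ⟨w, hw1, hw2⟩⟩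
  -- non-adjacencies
  have A4 : ¬ G.Adj (d i) (v (i + 2)) := by
    intro h
    exact n20 (hdinj (domv (i + 2) (d i) (hdD i) h)).symm
  have A5 : ¬ G.Adj (d i) (d (i + 2)) := by
    intro h
    exact n20 (hdinj (uniqD (d (i + 2)) (d i) (d (i + 2)) (hdD i) (hdD (i + 2))
      (Or.inr h) (Or.inl rfl))).symm
  have A6 : ¬ G.Adj (v i) (x (i + 1)) := fun h => sqhelp (x (i + 1)) h hx12
  have A7 : ¬ G.Adj (v i) (v (i + 2)) := fun h => nsq ⟨vne, Or.inl h⟩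
  have A8 : ¬ G.Adj (v i) (d (i + 2)) := by
    intro h
    exact n20 (hdinj (domv i (d (i + 2)) (hdD (i + 2)) h.symm))
  have A9 : ¬ G.Adj (x i) (v (i + 2)) := fun h => sqhelp (x i) (hx i).1 h
  have nd1v1 : ¬ G.Adj (v (i + 1)) (d i) := by
    intro h
    exact n10 (hdinj (domv (i + 1) (d i) (hdD i) h.symm)).symm
  have nd2v1 : ¬ G.Adj (v (i + 1)) (d (i + 2)) := by
    intro h
    exact n21 (hdinj (domv (i + 1) (d (i + 2)) (hdD (i + 2)) h.symm))
  -- distinctness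
  have nvx1 : v i ≠ x (i + 1) := by
    intro h
    exact nadj_vv i (h ▸ (hx (i + 1)).1).symm
  have nxv2 : x i ≠ v (i + 2) := fun h => A7 (h ▸ (hx i).1)
  -- Claim A : d i is not adjacent to x (i+1)
  have claimA : ¬ G.Adj (d i) (x (i + 1)) := by
    intro hA
    exact no_house hH (v i) (x i) (x (i + 1)) (d i) (v (i + 1))
      (hx i).1 (hxadj i) hA.symm (hdv i) (hx i).2.symm (hx (i + 1)).1
      A6 (fun h => hni h.symm) (fun h => nadj_vv i h.symm) nd1v1
      nvx1 ((hout i i).2).symm (fun h => n10 (hinj h)) ((hout i (i + 1)).1).symm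
  -- main adjacency
  have hmain : G.Adj (d (i + 2)) (x (i + 1)) := by
    by_contra hB1
    -- Claim B : d (i+2) is not adjacent to x i
    have claimB : ¬ G.Adj (d (i + 2)) (x i) := by
      intro hB
      exact no_house hH (d (i + 2)) (x i) (x (i + 1)) (v (i + 2)) (v (i + 1))
        hB (hxadj i) hx12 (hdv (i + 2)).symm (hx i).2.symm (hx (i + 1)).1
        hB1 A9 nd2v1 nadj_vv12
        (hout (i + 2) (i + 1)).2 nxv2 ((hout (i + 2) (i + 1)).1).symm
        (fun h => n21 (hinj h).symm)
    -- induced P6 : d i, v i, x i, x (i+1), v (i+2), d (i+2)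
    exact no_p6 h6 (d i) (v i) (x i) (x (i + 1)) (v (i + 2)) (d (i + 2))
      (hdv i) (hx i).1 (hxadj i) hx12 (hdv (i + 2)).symm
      hni claimA A4 A5 A6 A7 A8 A9 (fun h => claimB h.symm) (fun h => hB1 h.symm)
      (hout i i).2 (hout i (i + 1)).2 (hout i (i + 2)).1 (fun h => n20 (hdinj h).symm)
      nvx1 (fun h => n20 (hinj h).symm) ((hout (i + 2) i).1).symm
      nxv2 ((hout (i + 2) i).2).symm ((hout (i + 2) (i + 1)).2).symm
  refine ⟨hmain, ?_⟩
  have h12 : i + 2 - 1 = i + 1 := by ring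
  rcases hone (i + 2) with h | h
  · rw [h12] at h
    exact absurd hmain h
  · exact h
end

section
/- Let G be a P₆-free graph (no efficient dominating set needed) and let a, b, c, d, e be five vertices that are consecutive on an odd antihole of G² (i.e., consecutive pairs among a,b,c,d,e are nonadjacent in G², and all other pairs among them are adjacent in G²). If ac ∈ E(G), then be ∉ E(G). -/
open SimpleGraph Finset

variable {V : Type*}

lemma buildP6 (G : SimpleGraph V) (v0 v1 v2 v3 v4 v5 : V)
    (a01 : G.Adj v0 v1) (a12 : G.Adj v1 v2) (a23 : G.Adj v2 v3)
    (a34 : G.Adj v3 v4) (a45 : G.Adj v4 v5)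
    (d02 : v0 ≠ v2) (d03 : v0 ≠ v3) (d04 : v0 ≠ v4) (d05 : v0 ≠ v5)
    (d13 : v1 ≠ v3) (d14 : v1 ≠ v4) (d15 : v1 ≠ v5)
    (d24 : v2 ≠ v4) (d25 : v2 ≠ v5) (d35 : v3 ≠ v5)
    (n02 : ¬G.Adj v0 v2) (n03 : ¬G.Adj v0 v3) (n04 : ¬G.Adj v0 v4) (n05 : ¬G.Adj v0 v5)
    (n13 : ¬G.Adj v1 v3) (n14 : ¬G.Adj v1 v4) (n15 : ¬G.Adj v1 v5)
    (n24 : ¬G.Adj v2 v4) (n25 : ¬G.Adj v2 v5) (n35 : ¬G.Adj v3 v5) :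
    Nonempty (pathGraph 6 ↪g G) := by
  have d01 := a01.ne; have d12 := a12.ne; have d23 := a23.ne
  have d34 := a34.ne; have d45 := a45.ne
  have m02 : ¬G.Adj v2 v0 := fun h => n02 h.symm
  have m03 : ¬G.Adj v3 v0 := fun h => n03 h.symm
  have m04 : ¬G.Adj v4 v0 := fun h => n04 h.symm
  have m05 : ¬G.Adj v5 v0 := fun h => n05 h.symm
  have m13 : ¬G.Adj v3 v1 := fun h => n13 h.symm
  have m14 : ¬G.Adj v4 v1 := fun h => n14 h.symm
  have m15 : ¬G.Adj v5 v1 := fun h => n15 h.symm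
  have m24 : ¬G.Adj v4 v2 := fun h => n24 h.symm
  have m25 : ¬G.Adj v5 v2 := fun h => n25 h.symm
  have m35 : ¬G.Adj v5 v3 := fun h => n35 h.symm
  refine ⟨⟨⟨fun i => if i = 0 then v0 else if i = 1 then v1 else if i = 2 then v2
      else if i = 3 then v3 else if i = 4 then v4 else v5, ?_⟩, ?_⟩⟩
  · intro i j h
    fin_cases i <;> fin_cases j <;> simp_all
  · intro i j; dsimp only [DFunLike.coe]
    fin_cases i <;> fin_cases j <;>
      simp [pathGraph_adj, a01, a12, a23, a34, a45,
        a01.symm, a12.symm, a23.symm, a34.symm, a45.symm,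
        n02, n03, n04, n05, n13, n14, n15, n24, n25, n35,
        m02, m03, m04, m05, m13, m14, m15, m24, m25, m35, G.irrefl] <;> decide

lemma sq_not (G : SimpleGraph V) {u v : V} (h : u ≠ v) (n : ¬ (square G).Adj u v) :
    ¬G.Adj u v ∧ ∀ w, G.Adj u w → ¬ G.Adj w v := by
  constructor
  · exact fun ha => n ⟨h, Or.inl ha⟩
  · exact fun w h1 h2 => n ⟨h, Or.inr ⟨w, h1, h2⟩⟩

theorem stmt16 (G : SimpleGraph V) (h6 : _root_.Free G (pathGraph 6))
    (a b c d e : V)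
    (hab : a ≠ b) (hbc : b ≠ c) (hcd : c ≠ d) (hde : d ≠ e)
    (nab : ¬ (square G).Adj a b) (nbc : ¬ (square G).Adj b c)
    (ncd : ¬ (square G).Adj c d) (nde : ¬ (square G).Adj d e)
    (aac : (square G).Adj a c) (aad : (square G).Adj a d) (aae : (square G).Adj a e)
    (abd : (square G).Adj b d) (abe : (square G).Adj b e) (ace : (square G).Adj c e)
    (hac : G.Adj a c) :
    ¬ G.Adj b e := by
  intro hbe
  obtain ⟨Pab1, Pab2⟩ := sq_not G hab nab
  obtain ⟨Pbc1, Pbc2⟩ := sq_not G hbc nbc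
  obtain ⟨Pcd1, Pcd2⟩ := sq_not G hcd ncd
  obtain ⟨Pde1, Pde2⟩ := sq_not G hde nde
  have nbd : ¬G.Adj b d := fun h => Pde2 b h.symm hbe
  have nad : ¬G.Adj a d := fun h => Pcd2 a hac.symm h
  have nae : ¬G.Adj a e := fun h => Pab2 e h hbe.symm
  have nce : ¬G.Adj c e := fun h => Pbc2 e hbe h.symm
  obtain ⟨w, hbw, hwd⟩ : ∃ w, G.Adj b w ∧ G.Adj w d := by
    rcases abd.2 with h | h
    · exact absurd h nbd
    · exact h
  obtain ⟨y, hay, hyd⟩ : ∃ y, G.Adj a y ∧ G.Adj y d := by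
    rcases aad.2 with h | h
    · exact absurd h nad
    · exact h
  have nwe : ¬G.Adj w e := fun h => Pde2 w hwd.symm h
  have nwc : ¬G.Adj w c := fun h => Pcd2 w h.symm hwd
  have nwa : ¬G.Adj w a := fun h => Pab2 w h.symm hbw.symm
  have nyb : ¬G.Adj y b := fun h => Pab2 y hay h
  have nye : ¬G.Adj y e := fun h => Pde2 y hyd.symm h
  have nyc : ¬G.Adj y c := fun h => Pcd2 y h.symm hyd
  -- distinctness facts
  have dew : e ≠ w := fun h => Pde1 (h ▸ hwd).symm
  have dey : e ≠ y := fun h => nae (h ▸ hay)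
  have dea : e ≠ a := fun h => Pab1 (h ▸ hbe).symm
  have dbd : b ≠ d := abd.1
  have dby : b ≠ y := fun h => Pab1 (h ▸ hay)
  have dwy : w ≠ y := fun h => nyb (h ▸ hbw).symm
  have dwa : w ≠ a := fun h => Pab1 (h ▸ hbw).symm
  have dwc : w ≠ c := fun h => Pcd1 (h ▸ hwd)
  have dyc : y ≠ c := fun h => Pcd1 (h ▸ hyd)
  have dec : e ≠ c := Ne.symm ace.1
  have h6' : IsEmpty (pathGraph 6 ↪g G) := h6
  by_cases hwy : G.Adj w y
  · -- induced P6 : e b w y a c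
    exact h6'.false (Classical.choice (buildP6 G e b w y a c
      hbe.symm hbw hwy hay.symm hac
      dew dey dea dec dby hab.symm hbc dwa dwc dyc
      (fun h => nwe h.symm) (fun h => nye h.symm) (fun h => nae h.symm)
      (fun h => nce h.symm) (fun h => nyb h.symm) (fun h => Pab1 h.symm) Pbc1
      nwa nwc nyc))
  · -- induced P6 : e b w d y a
    exact h6'.false (Classical.choice (buildP6 G e b w d y a
      hbe.symm hbw hwd hyd.symm hay.symm
      dew (Ne.symm hde) dey dea dbd dby hab.symm dwy dwa (Ne.symm aad.1)
      (fun h => nwe h.symm) (fun h => Pde1 h.symm) (fun h => nye h.symm)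
      (fun h => nae h.symm) nbd (fun h => nyb h.symm) (fun h => Pab1 h.symm)
      hwy nwa (fun h => nad h.symm)))
end

section
/- Let G be a P₆-free graph with efficient dominating set D, and let a ∈ D be a real vertex of an odd antihole C in G². If b, c are co-adjacent real vertices of C with a adjacent to both b and c in G², then exactly one of d_G(a,b), d_G(a,c) equals 1 and the other equals 2. -/
open SimpleGraph Finset

variable {V : Type*}

lemma dist_eq_two' {G : SimpleGraph V} {a b x : V} (hne : a ≠ b) (hnadj : ¬ G.Adj a b)
    (h1 : G.Adj a x) (h2 : G.Adj x b) : G.dist a b = 2 := by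
  have hle : G.dist a b ≤ 2 := by
    have := G.dist_le (h1.toWalk.append h2.toWalk)
    simpa using this
  have hr : G.Reachable a b := ⟨h1.toWalk.append h2.toWalk⟩
  have hpos : 0 < G.dist a b := hr.pos_dist_of_ne hne
  have hone : G.dist a b ≠ 1 := fun h => hnadj (SimpleGraph.dist_eq_one_iff_adj.mp h)
  omega

lemma dom_eq' {G : SimpleGraph V} {D : Set V} (hED : IsEDS G D) {d₁ d₂ v : V}
    (h1 : d₁ ∈ D) (h2 : d₂ ∈ D) (k1 : d₁ = v ∨ G.Adj d₁ v) (k2 : d₂ = v ∨ G.Adj d₂ v) :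
    d₁ = d₂ := by
  obtain ⟨e, -, hu⟩ := hED v
  rw [hu d₁ ⟨h1, k1⟩, hu d₂ ⟨h2, k2⟩]

set_option maxHeartbeats 4000000 in
lemma p6_emb {G : SimpleGraph V} {v0 v1 v2 v3 v4 v5 : V}
    (h01 : G.Adj v0 v1) (h12 : G.Adj v1 v2) (h23 : G.Adj v2 v3) (h34 : G.Adj v3 v4)
    (h45 : G.Adj v4 v5)
    (n02 : ¬ G.Adj v0 v2) (n03 : ¬ G.Adj v0 v3) (n04 : ¬ G.Adj v0 v4) (n05 : ¬ G.Adj v0 v5) (n13 : ¬ G.Adj v1 v3) (n14 : ¬ G.Adj v1 v4) (n15 : ¬ G.Adj v1 v5) (n24 : ¬ G.Adj v2 v4) (n25 : ¬ G.Adj v2 v5) (n35 : ¬ G.Adj v3 v5)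
    (d02 : v0 ≠ v2) (d03 : v0 ≠ v3) (d04 : v0 ≠ v4) (d05 : v0 ≠ v5) (d13 : v1 ≠ v3) (d14 : v1 ≠ v4) (d15 : v1 ≠ v5) (d24 : v2 ≠ v4) (d25 : v2 ≠ v5) (d35 : v3 ≠ v5) : Nonempty (pathGraph 6 ↪g G) := by
  have d01 := h01.ne; have d12 := h12.ne; have d23 := h23.ne
  have d34 := h34.ne; have d45 := h45.ne
  refine ⟨⟨⟨fun i => match i with
    | ⟨0,_⟩ => v0 | ⟨1,_⟩ => v1 | ⟨2,_⟩ => v2 | ⟨3,_⟩ => v3 | ⟨4,_⟩ => v4 | ⟨5,_⟩ => v5, ?_⟩, ?_⟩⟩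
  · intro i j h
    fin_cases i <;> fin_cases j <;>
      first
        | rfl
        | exact absurd h d01 | exact absurd h.symm d01
        | exact absurd h d12 | exact absurd h.symm d12
        | exact absurd h d23 | exact absurd h.symm d23
        | exact absurd h d34 | exact absurd h.symm d34
        | exact absurd h d45 | exact absurd h.symm d45
        | exact absurd h d02 | exact absurd h.symm d02
        | exact absurd h d03 | exact absurd h.symm d03
        | exact absurd h d04 | exact absurd h.symm d04
        | exact absurd h d05 | exact absurd h.symm d05
        | exact absurd h d13 | exact absurd h.symm d13
        | exact absurd h d14 | exact absurd h.symm d14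
        | exact absurd h d15 | exact absurd h.symm d15
        | exact absurd h d24 | exact absurd h.symm d24
        | exact absurd h d25 | exact absurd h.symm d25
        | exact absurd h d35 | exact absurd h.symm d35
  · intro i j
    fin_cases i <;> fin_cases j <;>
      first
        | exact iff_of_true h01 (by rw [pathGraph_adj]; decide)
        | exact iff_of_true h01.symm (by rw [pathGraph_adj]; decide)
        | exact iff_of_true h12 (by rw [pathGraph_adj]; decide)
        | exact iff_of_true h12.symm (by rw [pathGraph_adj]; decide)
        | exact iff_of_true h23 (by rw [pathGraph_adj]; decide)
        | exact iff_of_true h23.symm (by rw [pathGraph_adj]; decide)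
        | exact iff_of_true h34 (by rw [pathGraph_adj]; decide)
        | exact iff_of_true h34.symm (by rw [pathGraph_adj]; decide)
        | exact iff_of_true h45 (by rw [pathGraph_adj]; decide)
        | exact iff_of_true h45.symm (by rw [pathGraph_adj]; decide)
        | exact iff_of_false (G.loopless.irrefl _) (by rw [pathGraph_adj]; decide)
        | exact iff_of_false n02 (by rw [pathGraph_adj]; decide)
        | exact iff_of_false (fun h => n02 h.symm) (by rw [pathGraph_adj]; decide)
        | exact iff_of_false n03 (by rw [pathGraph_adj]; decide)
        | exact iff_of_false (fun h => n03 h.symm) (by rw [pathGraph_adj]; decide)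
        | exact iff_of_false n04 (by rw [pathGraph_adj]; decide)
        | exact iff_of_false (fun h => n04 h.symm) (by rw [pathGraph_adj]; decide)
        | exact iff_of_false n05 (by rw [pathGraph_adj]; decide)
        | exact iff_of_false (fun h => n05 h.symm) (by rw [pathGraph_adj]; decide)
        | exact iff_of_false n13 (by rw [pathGraph_adj]; decide)
        | exact iff_of_false (fun h => n13 h.symm) (by rw [pathGraph_adj]; decide)
        | exact iff_of_false n14 (by rw [pathGraph_adj]; decide)
        | exact iff_of_false (fun h => n14 h.symm) (by rw [pathGraph_adj]; decide)
        | exact iff_of_false n15 (by rw [pathGraph_adj]; decide)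
        | exact iff_of_false (fun h => n15 h.symm) (by rw [pathGraph_adj]; decide)
        | exact iff_of_false n24 (by rw [pathGraph_adj]; decide)
        | exact iff_of_false (fun h => n24 h.symm) (by rw [pathGraph_adj]; decide)
        | exact iff_of_false n25 (by rw [pathGraph_adj]; decide)
        | exact iff_of_false (fun h => n25 h.symm) (by rw [pathGraph_adj]; decide)
        | exact iff_of_false n35 (by rw [pathGraph_adj]; decide)
        | exact iff_of_false (fun h => n35 h.symm) (by rw [pathGraph_adj]; decide)


theorem stmt17 (G : SimpleGraph V) (h6 : _root_.Free G (pathGraph 6))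
    (D : Set V) (hED : IsEDS G D)
    (a b c : V) (ha : a ∈ D) (hbc : b ≠ c) (hbc2 : ¬ (square G).Adj b c)
    (hb : (square G).Adj a b) (hc : (square G).Adj a c) :
    (G.dist a b = 1 ∧ G.dist a c = 2) ∨ (G.dist a b = 2 ∧ G.dist a c = 1) := by
  obtain ⟨hab_ne, hb'⟩ := hb
  obtain ⟨hac_ne, hc'⟩ := hc
  have nbc : ¬ G.Adj b c := fun h => hbc2 ⟨hbc, Or.inl h⟩
  by_cases hab : G.Adj a b <;> by_cases hac : G.Adj a c
  · exact absurd ⟨hbc, Or.inr ⟨a, hab.symm, hac⟩⟩ hbc2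
  · obtain hc'' | ⟨y, hay, hyc⟩ := hc'
    · exact absurd hc'' hac
    exact Or.inl ⟨SimpleGraph.dist_eq_one_iff_adj.mpr hab, dist_eq_two' hac_ne hac hay hyc⟩
  · obtain hb'' | ⟨x, hax, hxb⟩ := hb'
    · exact absurd hb'' hab
    exact Or.inr ⟨dist_eq_two' hab_ne hab hax hxb, SimpleGraph.dist_eq_one_iff_adj.mpr hac⟩
  · obtain hb'' | ⟨x, hax, hxb⟩ := hb'
    · exact absurd hb'' hab
    obtain hc'' | ⟨y, hay, hyc⟩ := hc'
    · exact absurd hc'' hac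
    exfalso
    have nxc : ¬ G.Adj x c := fun h => hbc2 ⟨hbc, Or.inr ⟨x, hxb.symm, h⟩⟩
    have nyb : ¬ G.Adj y b := fun h => hbc2 ⟨hbc, Or.inr ⟨y, h.symm, hyc⟩⟩
    have hxy_ne : x ≠ y := fun h => nxc (h ▸ hyc)
    obtain ⟨d, ⟨hdD, hdb⟩, -⟩ := hED b
    have hd_adj_b : G.Adj d b := by
      rcases hdb with rfl | h
      · exact absurd (dom_eq' hED ha hdD (Or.inr hax) (Or.inr hxb.symm)) hab_ne
      · exact h
    have had : a ≠ d := fun h => hab (h ▸ hd_adj_b)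
    have nda : ¬ G.Adj d a := fun h => had (dom_eq' hED ha hdD (Or.inl rfl) (Or.inr h))
    have ndx : ¬ (d = x ∨ G.Adj d x) := fun h => had (dom_eq' hED ha hdD (Or.inr hax) h)
    have ndy : ¬ (d = y ∨ G.Adj d y) := fun h => had (dom_eq' hED ha hdD (Or.inr hay) h)
    have ndc : ¬ G.Adj d c := fun h => hbc2 ⟨hbc, Or.inr ⟨d, hd_adj_b.symm, h⟩⟩
    have hdc_ne : d ≠ c := fun h => nbc (by rw [← h]; exact hd_adj_b.symm)
    have hby_ne : b ≠ y := fun h => nbc (by rw [h]; exact hyc)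
    have hxc_ne : x ≠ c := fun h => hac (h ▸ hax)
    by_cases hxy : G.Adj x y
    · obtain ⟨e, ⟨heD, hec⟩, -⟩ := hED c
      have he_adj_c : G.Adj e c := by
        rcases hec with rfl | h
        · exact absurd (dom_eq' hED ha heD (Or.inr hay) (Or.inr hyc.symm)) hac_ne
        · exact h
      have hae : a ≠ e := fun h => hac (h ▸ he_adj_c)
      have nex : ¬ (e = x ∨ G.Adj e x) := fun h => hae (dom_eq' hED ha heD (Or.inr hax) h)
      have ney : ¬ (e = y ∨ G.Adj e y) := fun h => hae (dom_eq' hED ha heD (Or.inr hay) h)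
      have neb : ¬ G.Adj e b := fun h => hbc2 ⟨hbc, Or.inr ⟨e, h.symm, he_adj_c⟩⟩
      have heb_ne : e ≠ b := fun h => nbc (by rw [← h]; exact he_adj_c)
      have hde_ne : d ≠ e := fun h => ndc (by rw [h]; exact he_adj_c)
      have nde : ¬ G.Adj d e := fun h => hde_ne (dom_eq' hED hdD heD (Or.inr h) (Or.inl rfl))
      refine (p6_emb hd_adj_b hxb.symm hxy hyc he_adj_c.symm
        (fun h => ndx (Or.inr h)) (fun h => ndy (Or.inr h)) ndc nde
        (fun h => nyb h.symm) nbc (fun h => neb h.symm)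
        nxc (fun h => nex (Or.inr h.symm)) (fun h => ney (Or.inr h.symm))
        (fun h => ndx (Or.inl h)) (fun h => ndy (Or.inl h)) hdc_ne hde_ne
        hby_ne hbc (fun h => heb_ne h.symm)
        hxc_ne (fun h => nex (Or.inl h.symm)) (fun h => ney (Or.inl h.symm))).elim h6.false
    · refine (p6_emb hd_adj_b hxb.symm hax.symm hay hyc
        (fun h => ndx (Or.inr h)) nda (fun h => ndy (Or.inr h)) ndc
        (fun h => hab h.symm) (fun h => nyb h.symm) nbc
        hxy nxc hac
        (fun h => ndx (Or.inl h)) (fun h => had h.symm) (fun h => ndy (Or.inl h)) hdc_ne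
        (fun h => hab_ne h.symm) hby_ne hbc
        hxy_ne hxc_ne hac_ne).elim h6.false
end
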